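/- arXiv:1305.6502 — 3 statements merged into one kernel-verified Lean document; each statement's English description precedes it below -/
import Mathlib

section
/- Let Ψ be a non-linear branching mechanism of infinite variation type and let u be a flow for Ψ. Then for every t > 0, lim_{λ→∞} u(t,λ)/λ = 0. -/
open MeasureTheory Set Filter Topology
open scoped ENNReal NNReal

/-- The Lévy–Khintchine shape of a branching mechanism:
`Ψ(λ) = αλ + βλ² + ∫_{(0,∞)} (e^{−λr} − 1 + λr·1_{r<1}) π(dr)`. -/
noncomputable def psiShape (a b : ℝ) (piM : Measure ℝ) (l : ℝ) : ℝ :=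
  a * l + b * l ^ 2 +
    ∫ r, (Real.exp (-l * r) - 1 + (if r < 1 then l * r else 0)) ∂piM

/-- `Ψ` is a branching mechanism with parameters `a = α`, `b = β` and Lévy measure `piM = π`:
`β ≥ 0`, `π` is carried by `(0,∞)`, `∫ (1 ∧ r²) π(dr) < ∞`, and `Ψ` has the
Lévy–Khintchine form on `[0,∞)`. -/
def IsBranchingMechanism (Ψ : ℝ → ℝ) (a b : ℝ) (piM : Measure ℝ) : Prop :=
  0 ≤ b ∧ piM (Set.Ioi (0:ℝ))ᶜ = 0 ∧
    (∫⁻ r, ENNReal.ofReal (min 1 (r ^ 2)) ∂piM) < ⊤ ∧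
    ∀ l, 0 ≤ l → Ψ l = psiShape a b piM l

/-- Non-linearity of the branching mechanism: `β > 0` or `π ≠ 0`. -/
def IsNonLinear (b : ℝ) (piM : Measure ℝ) : Prop := 0 < b ∨ piM ≠ 0

/-- Finite variation type: `β = 0` and `∫_{(0,1)} r π(dr) < ∞`. -/
def FiniteVariationType (b : ℝ) (piM : Measure ℝ) : Prop :=
  b = 0 ∧ (∫⁻ r in Set.Ioo (0:ℝ) 1, ENNReal.ofReal r ∂piM) < ⊤

/-- The drift constant `D = α + ∫_{(0,1)} r π(dr)` (finite variation cases). -/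
noncomputable def Dconst (a : ℝ) (piM : Measure ℝ) : ℝ :=
  a + ∫ r in Set.Ioo (0:ℝ) 1, r ∂piM

/-- `u` is a flow for `Ψ`: for every `λ > 0`, `u(0,λ) = λ`, `u(t,λ) > 0` and
`∂_t u(t,λ) = −Ψ(u(t,λ))` on `[0,∞)`. -/
def IsFlow (Ψ : ℝ → ℝ) (u : ℝ → ℝ → ℝ) : Prop :=
  (∀ l, 0 < l → u 0 l = l) ∧
  (∀ l, 0 < l → ∀ t, 0 ≤ t → 0 < u t l) ∧
  (∀ l, 0 < l → ∀ t, 0 ≤ t →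
    HasDerivWithinAt (fun s => u s l) (-(Ψ (u t l))) (Set.Ici 0) t)

section AuxCSBP

lemma exp_ineq1 (x : ℝ) : 0 ≤ Real.exp (-x) - 1 + x := by
  have := Real.add_one_le_exp (-x); linarith

lemma exp_ineq2 {x : ℝ} (hx : 0 ≤ x) : Real.exp (-x) - 1 + x ≤ x ^ 2 := by
  rcases le_or_gt x 1 with h | h
  · have h1 : |(-x)| ≤ 1 := by rw [abs_neg, abs_of_nonneg hx]; exact h
    have := Real.abs_exp_sub_one_sub_id_le h1
    have h2 : Real.exp (-x) - 1 - (-x) ≤ (-x) ^ 2 := (abs_le.mp this).2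
    nlinarith
  · have : Real.exp (-x) ≤ 1 := by
      rw [Real.exp_le_one_iff]; linarith
    nlinarith

lemma exp_ratio_mono {x y : ℝ} (hx : 0 < x) (hxy : x ≤ y) :
    (1 - Real.exp (-y)) / y ≤ (1 - Real.exp (-x)) / x := by
  have hy : 0 < y := hx.trans_le hxy
  rw [div_le_div_iff₀ hy hx]
  -- want (1 - e^{-y}) * x ≤ (1 - e^{-x}) * y
  have hcv : Real.exp ((x/y) • (-y) + (1 - x/y) • (0:ℝ)) ≤
      (x/y) * Real.exp (-y) + (1 - x/y) * Real.exp 0 :=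
    convexOn_exp.2 (mem_univ (-y)) (mem_univ (0:ℝ)) (by positivity)
      (by have : x / y ≤ 1 := (div_le_one hy).mpr hxy; linarith) (by ring)
  have hxy' : (x / y) • (-y) + (1 - x / y) • (0:ℝ) = -x := by
    simp only [smul_eq_mul]; field_simp; ring
  rw [hxy'] at hcv
  simp only [smul_eq_mul, mul_zero, add_zero, Real.exp_zero] at hcv
  -- hcv : exp (-x) ≤ x / y * exp (-y) + (1 - x / y) * 1
  have h2 : Real.exp (-x) * y ≤ x * Real.exp (-y) + (y - x) := by
    have := mul_le_mul_of_nonneg_right hcv hy.le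
    field_simp at this
    nlinarith [this]
  nlinarith


lemma mf (l : ℝ) : Measurable (fun r : ℝ => Real.exp (-l * r) - 1 + (if r < 1 then l * r else 0)) := by
  refine ((Real.measurable_exp.comp (measurable_id.const_mul (-l))).sub measurable_const).add ?_
  exact Measurable.ite measurableSet_Iio (measurable_id.const_mul l) measurable_const

lemma mmin : Measurable (fun r : ℝ => min 1 (r ^ 2)) :=
  measurable_const.min (measurable_id.pow_const 2)

example : True := trivial

lemma intgr (piM : Measure ℝ) (hsupp : piM (Set.Ioi (0:ℝ))ᶜ = 0)
    (hfin : (∫⁻ r, ENNReal.ofReal (min 1 (r ^ 2)) ∂piM) < ⊤) (l : ℝ) (hl : 0 ≤ l) :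
    Integrable (fun r => Real.exp (-l * r) - 1 + (if r < 1 then l * r else 0)) piM := by
  have hg : Integrable (fun r => (l ^ 2 + 1) * min 1 (r ^ 2)) piM := by
    refine ⟨(mmin.const_mul _).aestronglyMeasurable, ?_⟩
    rw [hasFiniteIntegral_iff_ofReal (Eventually.of_forall fun r => by positivity)]
    calc ∫⁻ r, ENNReal.ofReal ((l ^ 2 + 1) * min 1 (r ^ 2)) ∂piM
        = ∫⁻ r, ENNReal.ofReal (l ^ 2 + 1) * ENNReal.ofReal (min 1 (r ^ 2)) ∂piM := by
          congr 1; funext r; rw [ENNReal.ofReal_mul (by positivity)]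
      _ = ENNReal.ofReal (l ^ 2 + 1) * ∫⁻ r, ENNReal.ofReal (min 1 (r ^ 2)) ∂piM :=
          lintegral_const_mul _ mmin.ennreal_ofReal
      _ < ⊤ := ENNReal.mul_lt_top ENNReal.ofReal_lt_top hfin
  refine hg.mono' (mf l).aestronglyMeasurable ?_
  have hae : ∀ᵐ r ∂piM, r ∈ Set.Ioi (0:ℝ) := mem_ae_iff.mpr hsupp
  filter_upwards [hae] with r hr
  have hr0 : (0:ℝ) < r := hr
  rw [Real.norm_eq_abs]
  by_cases hr1 : r < 1
  · rw [if_pos hr1]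
    have h0 := exp_ineq1 (l * r)
    have h2 := exp_ineq2 (mul_nonneg hl hr0.le)
    have hne : -l * r = -(l * r) := by ring
    rw [hne, abs_of_nonneg (by linarith)]
    have hmin : min 1 (r ^ 2) = r ^ 2 := min_eq_right (by nlinarith)
    rw [hmin]; nlinarith
  · push_neg at hr1
    rw [if_neg (not_lt.mpr hr1)]
    have hexp1 : Real.exp (-l * r) ≤ 1 := Real.exp_le_one_iff.mpr (by nlinarith)
    have hexp0 : 0 < Real.exp (-l * r) := Real.exp_pos _
    have hmin : min 1 (r ^ 2) = 1 := min_eq_left (by nlinarith)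
    rw [hmin, abs_le]; constructor <;> nlinarith

lemma mg (l : ℝ) : Measurable (fun r : ℝ => r - (1 - Real.exp (-l * r)) / l) :=
  measurable_id.sub
    ((measurable_const.sub (Real.measurable_exp.comp (measurable_id.const_mul (-l)))).div_const l)

lemma ici_fin (piM : Measure ℝ) (hfin : (∫⁻ r, ENNReal.ofReal (min 1 (r ^ 2)) ∂piM) < ⊤) :
    piM (Set.Ici (1:ℝ)) < ⊤ := by
  have h0 : piM (Set.Ici (1:ℝ)) = ∫⁻ _ in Set.Ici (1:ℝ), 1 ∂piM := (setLIntegral_one _).symm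
  rw [h0]
  refine lt_of_le_of_lt (le_trans (setLIntegral_mono' measurableSet_Ici fun r hr => ?_)
    (setLIntegral_le_lintegral _ _)) hfin
  have : min 1 (r ^ 2) = 1 := min_eq_left (by nlinarith [mem_Ici.mp hr])
  rw [this]; simp

noncomputable def TT (piM : Measure ℝ) (l : ℝ) : ℝ≥0∞ :=
  ∫⁻ r in Set.Ioo (0:ℝ) 1, ENNReal.ofReal (r - (1 - Real.exp (-l * r)) / l) ∂piM

lemma pt_eq {l : ℝ} (r : ℝ) (hl : l ≠ 0) :
    r - (1 - Real.exp (-l * r)) / l = (Real.exp (-l * r) - 1 + l * r) / l := by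
  field_simp; ring

lemma pt_nonneg {l r : ℝ} (hl : 0 < l) : 0 ≤ r - (1 - Real.exp (-l * r)) / l := by
  rw [pt_eq r hl.ne']
  have h0 := exp_ineq1 (l * r)
  have : -(l * r) = -l * r := by ring
  rw [this] at h0
  positivity
lemma pt_le {l r : ℝ} (hl : 0 < l) (hr : 0 ≤ r) :
    r - (1 - Real.exp (-l * r)) / l ≤ l * r ^ 2 := by
  rw [pt_eq r hl.ne', div_le_iff₀ hl]
  have h2 := exp_ineq2 (mul_nonneg hl.le hr)
  have : -(l * r) = -l * r := by ring
  rw [this] at h2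
  nlinarith

lemma pt_mono {l l' r : ℝ} (hl : 0 < l) (hll : l ≤ l') (hr : 0 < r) :
    r - (1 - Real.exp (-l * r)) / l ≤ r - (1 - Real.exp (-l' * r)) / l' := by
  have hl' : 0 < l' := hl.trans_le hll
  have h := exp_ratio_mono (mul_pos hl hr) (by nlinarith : l * r ≤ l' * r)
  have e1 : -(l * r) = -l * r := by ring
  have e2 : -(l' * r) = -l' * r := by ring
  rw [e1, e2] at h
  have k1 : (1 - Real.exp (-l * r)) / (l * r) * r = (1 - Real.exp (-l * r)) / l := by
    field_simp
  have k2 : (1 - Real.exp (-l' * r)) / (l' * r) * r = (1 - Real.exp (-l' * r)) / l' := by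
    field_simp
  have := mul_le_mul_of_nonneg_right h hr.le
  rw [k1, k2] at this
  linarith

lemma intD (piM : Measure ℝ) {l : ℝ} (hl : 0 < l) :
    ∫ r in Set.Ioo (0:ℝ) 1, (Real.exp (-l * r) - 1 + l * r) ∂piM = l * (TT piM l).toReal := by
  have hnn : 0 ≤ᵐ[piM.restrict (Set.Ioo (0:ℝ) 1)] fun r => Real.exp (-l * r) - 1 + l * r := by
    refine Eventually.of_forall fun r => ?_
    have h0 := exp_ineq1 (l * r)
    have : -(l * r) = -l * r := by ring
    rw [this] at h0; simp only [Pi.zero_apply]; linarith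
  rw [integral_eq_lintegral_of_nonneg_ae hnn
    (((Real.measurable_exp.comp (measurable_id.const_mul (-l))).sub measurable_const).add
      (measurable_id.const_mul l)).aestronglyMeasurable]
  have hptw : ∀ r : ℝ, ENNReal.ofReal (Real.exp (-l * r) - 1 + l * r)
      = ENNReal.ofReal l * ENNReal.ofReal (r - (1 - Real.exp (-l * r)) / l) := by
    intro r
    rw [← ENNReal.ofReal_mul hl.le]
    congr 1
    rw [pt_eq r hl.ne']
    field_simp
  simp_rw [hptw]
  rw [lintegral_const_mul _ (mg l).ennreal_ofReal, ENNReal.toReal_mul,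
    ENNReal.toReal_ofReal hl.le]
  rfl

lemma TT_fin (piM : Measure ℝ) (hfin : (∫⁻ r, ENNReal.ofReal (min 1 (r ^ 2)) ∂piM) < ⊤)
    {l : ℝ} (hl : 0 < l) : TT piM l < ⊤ := by
  have hb : TT piM l ≤ ∫⁻ r in Set.Ioo (0:ℝ) 1, ENNReal.ofReal (l * min 1 (r ^ 2)) ∂piM := by
    refine setLIntegral_mono' measurableSet_Ioo fun r hr => ENNReal.ofReal_le_ofReal ?_
    have h1 := pt_le hl hr.1.le
    have : min 1 (r ^ 2) = r ^ 2 := min_eq_right (by nlinarith [hr.1, hr.2])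
    rw [this]; exact h1
  refine lt_of_le_of_lt (hb.trans (setLIntegral_le_lintegral _ _)) ?_
  have : ∀ r : ℝ, ENNReal.ofReal (l * min 1 (r ^ 2))
      = ENNReal.ofReal l * ENNReal.ofReal (min 1 (r ^ 2)) := fun r =>
    ENNReal.ofReal_mul hl.le
  simp_rw [this]
  rw [lintegral_const_mul _ mmin.ennreal_ofReal]
  exact ENNReal.mul_lt_top ENNReal.ofReal_lt_top hfin

lemma TT_mono (piM : Measure ℝ) {l l' : ℝ} (hl : 0 < l) (h : l ≤ l') :
    TT piM l ≤ TT piM l' :=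
  setLIntegral_mono' measurableSet_Ioo fun r hr =>
    ENNReal.ofReal_le_ofReal (pt_mono hl h hr.1)

lemma TT_top (piM : Measure ℝ)
    (hdiv : (∫⁻ r in Set.Ioo (0:ℝ) 1, ENNReal.ofReal r ∂piM) = ⊤) :
    ∀ R : ℝ, ∃ n : ℕ, ENNReal.ofReal R < TT piM ((n : ℝ) + 1) := by
  have key : (⨆ n : ℕ, TT piM ((n : ℝ) + 1)) = ⊤ := by
    have h1 : (∫⁻ r in Set.Ioo (0:ℝ) 1,
          ⨆ n : ℕ, ENNReal.ofReal (r - (1 - Real.exp (-((n : ℝ) + 1) * r)) / ((n : ℝ) + 1)) ∂piM)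
        = ⨆ n : ℕ, TT piM ((n : ℝ) + 1) := by
      refine lintegral_iSup' (fun n => (mg _).ennreal_ofReal.aemeasurable) ?_
      filter_upwards [ae_restrict_mem measurableSet_Ioo] with r hr
      intro n m hnm
      refine ENNReal.ofReal_le_ofReal (pt_mono (by positivity) ?_ hr.1)
      have : (n : ℝ) ≤ (m : ℝ) := Nat.cast_le.mpr hnm
      linarith
    rw [← h1]
    have h2 : (∫⁻ r in Set.Ioo (0:ℝ) 1,
          ⨆ n : ℕ, ENNReal.ofReal (r - (1 - Real.exp (-((n : ℝ) + 1) * r)) / ((n : ℝ) + 1)) ∂piM)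
        = ∫⁻ r in Set.Ioo (0:ℝ) 1, ENNReal.ofReal r ∂piM := by
      refine setLIntegral_congr_fun measurableSet_Ioo (fun r hr => ?_)
      have hmono : Monotone (fun n : ℕ =>
          ENNReal.ofReal (r - (1 - Real.exp (-((n : ℝ) + 1) * r)) / ((n : ℝ) + 1))) := by
        intro n m hnm
        refine ENNReal.ofReal_le_ofReal (pt_mono (by positivity) ?_ hr.1)
        have : (n : ℝ) ≤ (m : ℝ) := Nat.cast_le.mpr hnm
        linarith
      have hreal : Tendsto (fun n : ℕ => r - (1 - Real.exp (-((n : ℝ) + 1) * r)) / ((n : ℝ) + 1))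
          atTop (𝓝 r) := by
        have h0 : Tendsto (fun n : ℕ => (1 - Real.exp (-((n : ℝ) + 1) * r)) / ((n : ℝ) + 1))
            atTop (𝓝 0) := by
          refine squeeze_zero (fun n => ?_) (fun n => ?_)
            tendsto_one_div_add_atTop_nhds_zero_nat
          · have hexp : Real.exp (-((n : ℝ) + 1) * r) ≤ 1 :=
              Real.exp_le_one_iff.mpr (by nlinarith [hr.1])
            exact div_nonneg (by linarith) (by positivity)
          · have hpos := Real.exp_pos (-((n : ℝ) + 1) * r)
            gcongr
            linarith
        have := tendsto_const_nhds (x := r) (f := atTop (α := ℕ)) |>.sub h0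
        simpa using this
      have htend : Tendsto (fun n : ℕ =>
          ENNReal.ofReal (r - (1 - Real.exp (-((n : ℝ) + 1) * r)) / ((n : ℝ) + 1)))
          atTop (𝓝 (ENNReal.ofReal r)) :=
        (ENNReal.continuous_ofReal.tendsto _).comp hreal
      exact tendsto_nhds_unique (tendsto_atTop_iSup hmono) htend
    rw [h2, hdiv]
  intro R
  have h3 : ENNReal.ofReal R < ⨆ n : ℕ, TT piM ((n : ℝ) + 1) := by
    rw [key]; exact ENNReal.ofReal_lt_top
  exact lt_iSup_iff.mp h3

lemma psi_lb (Ψ : ℝ → ℝ) (a b : ℝ) (piM : Measure ℝ)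
    (hbm : IsBranchingMechanism Ψ a b piM) {l : ℝ} (hl : 0 < l) :
    a * l + b * l ^ 2 + l * (TT piM l).toReal - (piM (Set.Ici (1:ℝ))).toReal ≤ Ψ l := by
  obtain ⟨hb, hsupp, hfin, hshape⟩ := hbm
  rw [hshape l hl.le, psiShape]
  have hint := intgr piM hsupp hfin l hl.le
  have hres : piM.restrict (Set.Ioi (0:ℝ)) = piM :=
    Measure.restrict_eq_self_of_ae_mem (mem_ae_iff.mpr hsupp)
  have hdisj : Disjoint (Set.Ioo (0:ℝ) 1) (Set.Ici (1:ℝ)) :=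
    (Set.Iio_disjoint_Ici le_rfl).mono_left Set.Ioo_subset_Iio_self
  have hsplit : (∫ r, (Real.exp (-l * r) - 1 + (if r < 1 then l * r else 0)) ∂piM)
      = (∫ r in Set.Ioo (0:ℝ) 1, (Real.exp (-l * r) - 1 + (if r < 1 then l * r else 0)) ∂piM)
      + (∫ r in Set.Ici (1:ℝ), (Real.exp (-l * r) - 1 + (if r < 1 then l * r else 0)) ∂piM) := by
    rw [← setIntegral_union hdisj measurableSet_Ici hint.integrableOn hint.integrableOn,
      Set.Ioo_union_Ici_eq_Ioi zero_lt_one]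
    conv_lhs => rw [← hres]
  have hIoo : (∫ r in Set.Ioo (0:ℝ) 1,
        (Real.exp (-l * r) - 1 + (if r < 1 then l * r else 0)) ∂piM)
      = l * (TT piM l).toReal := by
    rw [setIntegral_congr_fun (g := fun r => Real.exp (-l * r) - 1 + l * r) measurableSet_Ioo
      (fun r hr => by rw [if_pos hr.2])]
    exact intD piM hl
  have hIci : -(piM (Set.Ici (1:ℝ))).toReal ≤ ∫ r in Set.Ici (1:ℝ),
      (Real.exp (-l * r) - 1 + (if r < 1 then l * r else 0)) ∂piM := by
    have h1 : ∫ _ in Set.Ici (1:ℝ), (-1 : ℝ) ∂piM = -(piM (Set.Ici (1:ℝ))).toReal := by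
      rw [setIntegral_const]; simp; rfl
    rw [← h1]
    refine setIntegral_mono_on
      (integrableOn_const (ici_fin piM hfin).ne) hint.integrableOn
      measurableSet_Ici fun r hr => ?_
    rw [if_neg (not_lt.mpr (mem_Ici.mp hr))]
    have := Real.exp_pos (-l * r)
    linarith
  rw [hsplit, hIoo]
  linarith

lemma psi_growth (Ψ : ℝ → ℝ) (a b : ℝ) (piM : Measure ℝ)
    (hbm : IsBranchingMechanism Ψ a b piM) (hiv : ¬ FiniteVariationType b piM) :
    ∀ M : ℝ, ∃ x0 : ℝ, 1 ≤ x0 ∧ ∀ x, x0 ≤ x → M * x ≤ Ψ x := by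
  intro M
  set C := (piM (Set.Ici (1:ℝ))).toReal with hC
  have hC0 : 0 ≤ C := ENNReal.toReal_nonneg
  rcases lt_or_ge 0 b with hb | hb'
  · refine ⟨max 1 ((M + C - a) / b), le_max_left _ _, fun x hx => ?_⟩
    have hx1 : 1 ≤ x := le_trans (le_max_left _ _) hx
    have hx0 : 0 < x := by linarith
    have hlb := psi_lb Ψ a b piM hbm hx0
    have hT : 0 ≤ (TT piM x).toReal := ENNReal.toReal_nonneg
    have hd : (M + C - a) / b ≤ x := le_trans (le_max_right _ _) hx
    have hbx : M + C - a ≤ b * x := by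
      rw [div_le_iff₀ hb] at hd; linarith
    nlinarith [mul_nonneg hx0.le hT, mul_nonneg (sub_nonneg.mpr hx1) (by linarith : (0:ℝ) ≤ a + b * x - M)]
  · have hb0 : b = 0 := le_antisymm hb' hbm.1
    have hdiv : (∫⁻ r in Set.Ioo (0:ℝ) 1, ENNReal.ofReal r ∂piM) = ⊤ := by
      by_contra h
      exact hiv ⟨hb0, lt_top_iff_ne_top.mpr h⟩
    obtain ⟨n, hn⟩ := TT_top piM hdiv (M + C - a)
    have hTn : M + C - a ≤ (TT piM ((n : ℝ) + 1)).toReal := by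
      rcases le_or_gt (M + C - a) 0 with h | h
      · exact h.trans ENNReal.toReal_nonneg
      · have hfinT : TT piM ((n : ℝ) + 1) ≠ ⊤ :=
          (TT_fin piM hbm.2.2.1 (by positivity)).ne
        rw [← ENNReal.ofReal_le_iff_le_toReal hfinT]
        exact hn.le
    refine ⟨max 1 ((n : ℝ) + 1), le_max_left _ _, fun x hx => ?_⟩
    have hx1 : 1 ≤ x := le_trans (le_max_left _ _) hx
    have hxn : (n : ℝ) + 1 ≤ x := le_trans (le_max_right _ _) hx
    have hx0 : 0 < x := by linarith
    have hlb := psi_lb Ψ a b piM hbm hx0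
    have hmono : (TT piM ((n : ℝ) + 1)).toReal ≤ (TT piM x).toReal :=
      ENNReal.toReal_mono (TT_fin piM hbm.2.2.1 hx0).ne (TT_mono piM (by positivity) hxn)
    rw [hb0] at hlb
    nlinarith [mul_le_mul_of_nonneg_left (hTn.trans hmono) hx0.le,
      mul_nonneg (sub_nonneg.mpr hx1) hC0]

lemma flow_bound (Ψ : ℝ → ℝ) (u : ℝ → ℝ → ℝ) (hu : IsFlow Ψ u)
    {M x0 : ℝ} (hM : 0 < M) (hx0 : 0 < x0) (hΨ : ∀ x, x0 ≤ x → M * x ≤ Ψ x)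
    {l : ℝ} (hl : 0 < l) {t : ℝ} (ht : 0 ≤ t) :
    u t l ≤ max x0 (l * Real.exp (-(M * t))) := by
  obtain ⟨h0, hpos, hderiv⟩ := hu
  set v : ℝ → ℝ := fun s => u s l with hv
  have hvc : ContinuousOn v (Set.Ici 0) := fun s hs => (hderiv l hl s hs).continuousWithinAt
  have hvderiv' : ∀ s : ℝ, 0 < s → HasDerivAt v (-(Ψ (v s))) s := fun s hs =>
    (hderiv l hl s hs.le).hasDerivAt (Ici_mem_nhds hs)
  by_cases hcase : ∀ s ∈ Set.Icc (0:ℝ) t, x0 < v s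
  · -- v stays above x0 on [0, t]; use exponential decay bound
    set g : ℝ → ℝ := fun s => v s * Real.exp (M * s) with hg
    have hexp : ∀ s : ℝ, HasDerivAt (fun s : ℝ => Real.exp (M * s))
        (Real.exp (M * s) * M) s := by
      intro s
      have h1 : HasDerivAt (fun s : ℝ => M * s) M s := by
        simpa using (hasDerivAt_id s).const_mul M
      exact h1.exp
    have hgd : ∀ s : ℝ, 0 < s → HasDerivAt g
        (-(Ψ (v s)) * Real.exp (M * s) + v s * (Real.exp (M * s) * M)) s := fun s hs =>
      (hvderiv' s hs).mul (hexp s)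
    have hganti : AntitoneOn g (Set.Icc 0 t) := by
      refine antitoneOn_of_deriv_nonpos (convex_Icc 0 t) ?_ ?_ ?_
      · exact (hvc.mono Set.Icc_subset_Ici_self).mul
          (Real.continuous_exp.comp (continuous_const.mul continuous_id)).continuousOn
      · intro s hs
        rw [interior_Icc] at hs
        exact ((hgd s hs.1).differentiableAt).differentiableWithinAt
      · intro s hs
        rw [interior_Icc] at hs
        rw [(hgd s hs.1).deriv]
        have hvs : x0 < v s := hcase s ⟨hs.1.le, hs.2.le⟩
        have hps : M * v s ≤ Ψ (v s) := hΨ _ hvs.le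
        have hep : 0 < Real.exp (M * s) := Real.exp_pos _
        nlinarith
    have h1 : g t ≤ g 0 := hganti ⟨le_rfl, ht⟩ ⟨ht, le_rfl⟩ ht
    have h2 : g 0 = l := by simp [hg, hv, h0 l hl]
    have h3 : v t * Real.exp (M * t) ≤ l := by rw [← h2]; exact h1
    have h4 : v t ≤ l * Real.exp (-(M * t)) := by
      rw [Real.exp_neg, ← div_eq_mul_inv, le_div_iff₀ (Real.exp_pos _)]
      exact h3
    exact h4.trans (le_max_right _ _)
  · -- v dips below x0, and then stays below x0
    push_neg at hcase
    obtain ⟨s0, hs0, hvs0⟩ := hcase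
    refine le_trans ?_ (le_max_left _ _)
    by_contra hvt
    push_neg at hvt
    set A : Set ℝ := Set.Icc s0 t ∩ v ⁻¹' Set.Iic x0 with hA
    have hvcont : ContinuousOn v (Set.Icc s0 t) :=
      hvc.mono fun s hs => le_trans hs0.1 hs.1
    have hAclosed : IsClosed A :=
      hvcont.preimage_isClosed_of_isClosed isClosed_Icc isClosed_Iic
    have hAne : A.Nonempty := ⟨s0, ⟨le_rfl, hs0.2⟩, hvs0⟩
    have hAbdd : BddAbove A := BddAbove.mono Set.inter_subset_left bddAbove_Icc
    set s2 : ℝ := sSup A with hs2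
    have hs2mem : s2 ∈ A := hAclosed.csSup_mem hAne hAbdd
    obtain ⟨hs2Icc, hs2v⟩ := hs2mem
    have hs2v' : v s2 ≤ x0 := hs2v
    have hs2t : s2 < t := lt_of_le_of_ne hs2Icc.2 (fun h => by
      rw [h] at hs2v'; exact absurd hs2v' (not_le.mpr hvt))
    have hs20 : 0 ≤ s2 := le_trans hs0.1 hs2Icc.1
    have habove : ∀ s, s2 < s → s ≤ t → x0 < v s := by
      intro s hss hst
      by_contra hc
      push_neg at hc
      have : s ∈ A := ⟨⟨le_trans hs2Icc.1 hss.le, hst⟩, hc⟩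
      exact absurd (le_csSup hAbdd this) (not_le.mpr hss)
    have hanti : StrictAntiOn v (Set.Icc s2 t) := by
      refine strictAntiOn_of_deriv_neg (convex_Icc s2 t) (hvc.mono fun s hs =>
        le_trans hs20 hs.1) ?_
      intro s hs
      rw [interior_Icc] at hs
      have hsp : 0 < s := lt_of_le_of_lt hs20 hs.1
      rw [(hvderiv' s hsp).deriv]
      have hvs : x0 < v s := habove s hs.1 hs.2.le
      have := hΨ _ hvs.le
      nlinarith
    have := hanti ⟨le_rfl, hs2t.le⟩ ⟨hs2t.le, le_rfl⟩ hs2t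
    linarith

end AuxCSBP

/-- for a non-linear branching mechanism of infinite variation type and any
flow `u` for it, `u(t,λ)/λ → 0` as `λ → ∞`, for every `t > 0`. -/
theorem csbp_infiniteVariation_ratio_limit
    (Ψ : ℝ → ℝ) (a b : ℝ) (piM : Measure ℝ) (u : ℝ → ℝ → ℝ)
    (hbm : IsBranchingMechanism Ψ a b piM) (hnl : IsNonLinear b piM)
    (hiv : ¬ FiniteVariationType b piM) (hu : IsFlow Ψ u) :
    ∀ t : ℝ, 0 < t →
      Tendsto (fun l => u t l / l) atTop (𝓝 0) := by
  intro t ht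
  rw [Metric.tendsto_atTop]
  intro ε hε
  set M : ℝ := max 1 ((-Real.log ε) / t + 1) with hM
  have hM0 : 0 < M := lt_of_lt_of_le zero_lt_one (le_max_left _ _)
  have hMt : Real.exp (-(M * t)) < ε := by
    have h1 : (-Real.log ε) / t + 1 ≤ M := le_max_right _ _
    have h2 : -Real.log ε < M * t := by
      have h3 := mul_le_mul_of_nonneg_right h1 ht.le
      have h4 : ((-Real.log ε) / t + 1) * t = -Real.log ε + t := by
        field_simp
      rw [h4] at h3
      linarith
    calc Real.exp (-(M * t)) < Real.exp (Real.log ε) :=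
          Real.exp_lt_exp.mpr (by linarith)
      _ = ε := Real.exp_log hε
  obtain ⟨x0, hx01, hΨ⟩ := psi_growth Ψ a b piM hbm hiv M
  have hx00 : 0 < x0 := by linarith
  refine ⟨max x0 (x0 / ε + 1), fun l hl => ?_⟩
  have hlx0 : x0 ≤ l := le_trans (le_max_left _ _) hl
  have hlε : x0 / ε + 1 ≤ l := le_trans (le_max_right _ _) hl
  have hl0 : 0 < l := lt_of_lt_of_le hx00 hlx0
  have hb' := flow_bound Ψ u hu hM0 hx00 hΨ hl0 ht.le
  have hupos : 0 < u t l := hu.2.1 l hl0 t ht.le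
  rw [Real.dist_eq, sub_zero, abs_of_nonneg (div_nonneg hupos.le hl0.le)]
  have hstep : u t l / l ≤ max (x0 / l) (Real.exp (-(M * t))) := by
    have h5 : u t l / l ≤ max x0 (l * Real.exp (-(M * t))) / l := by
      gcongr
    have h6 : max x0 (l * Real.exp (-(M * t))) / l
        = max (x0 / l) (l * Real.exp (-(M * t)) / l) := by
      rw [max_div_div_right hl0.le]
    have h7 : l * Real.exp (-(M * t)) / l = Real.exp (-(M * t)) :=
      mul_div_cancel_left₀ _ hl0.ne'
    rw [h6, h7] at h5
    exact h5
  refine lt_of_le_of_lt hstep (max_lt ?_ hMt)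
  rw [div_lt_iff₀ hl0]
  have h8 : ε * (x0 / ε + 1) ≤ ε * l := mul_le_mul_of_nonneg_left hlε hε.le
  have h9 : ε * (x0 / ε + 1) = x0 + ε := by field_simp
  nlinarith
end

section
/- Let Ψ be a non-linear branching mechanism of infinite variation type, let u be a flow for Ψ, and let (p_t) be a CSBP(Ψ) transition family. For each t > 0 let ν_t be a Borel measure on (0,∞] with ν_t({∞}) < ∞, ∫_{(0,∞)} (1 ∧ r) ν_t(dr) < ∞, and u(t,λ) = ∫_{(0,∞]} (1 − e^{−λr}) ν_t(dr) for all λ > 0 (with the convention e^{−λ·∞} = 0). Then for all s, t > 0 and every Borel set A ⊆ (0,∞], ν_{t+s}(A) = ∫_{(0,∞]} p_t(x, A) ν_s(dx). -/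
open MeasureTheory Set Filter Topology
open scoped ENNReal NNReal

/-- `p` is a CSBP(Ψ) transition family for the flow `u`: each `p t x` is a probability
measure on `[0,∞]` (modelled by `ℝ≥0∞`), with Laplace transform over the finite part
`exp(−x u(t,λ))` for finite `x`, and `p t ∞ = δ_∞`. -/
def IsCSBPTransition (u : ℝ → ℝ → ℝ) (p : ℝ → ℝ≥0∞ → Measure ℝ≥0∞) : Prop :=
  (∀ t : ℝ, 0 ≤ t → ∀ x : ℝ≥0∞, IsProbabilityMeasure (p t x)) ∧
  (∀ t : ℝ, 0 ≤ t → ∀ x : ℝ≥0∞, x ≠ ⊤ → ∀ l : ℝ, 0 < l →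
    (∫⁻ z in {(⊤ : ℝ≥0∞)}ᶜ, ENNReal.ofReal (Real.exp (-l * z.toReal)) ∂(p t x)) =
      ENNReal.ofReal (Real.exp (-(x.toReal) * u t l))) ∧
  (∀ t : ℝ, 0 ≤ t → p t ⊤ = Measure.dirac ⊤)

/-- `ν` is a family of Lévy measures representing the flow `u`: for each `t > 0`,
`ν t` is a measure on `(0,∞]` (modelled by `ℝ≥0∞` with no mass at `0`), with
`ν_t({∞}) < ∞`, `∫_{(0,∞)} (1 ∧ r) ν_t(dr) < ∞` and
`u(t,λ) = ∫_{(0,∞]} (1 − e^{−λr}) ν_t(dr)` (with the convention `e^{−λ·∞} = 0`). -/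
def IsLevyRep (u : ℝ → ℝ → ℝ) (ν : ℝ → Measure ℝ≥0∞) : Prop :=
  ∀ t : ℝ, 0 < t →
    ν t {0} = 0 ∧ ν t {⊤} < ⊤ ∧
    (∫⁻ r in {(⊤ : ℝ≥0∞)}ᶜ, min 1 r ∂(ν t)) < ⊤ ∧
    ∀ l : ℝ, 0 < l →
      ENNReal.ofReal (u t l) =
        ∫⁻ r, (if r = ⊤ then 1 else ENNReal.ofReal (1 - Real.exp (-l * r.toReal))) ∂(ν t)

namespace CSBPAux

lemma one_sub_exp_le (z : ℝ) : 1 - Real.exp (-z) ≤ z := by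
  have h := Real.add_one_le_exp (-z); linarith

lemma exp_est_nonneg {z : ℝ} (hz : 0 ≤ z) : 0 ≤ Real.exp (-z) - 1 + z := by
  have h := Real.add_one_le_exp (-z); linarith

lemma exp_est_le_sq {z : ℝ} (hz : 0 ≤ z) : Real.exp (-z) - 1 + z ≤ z ^ 2 := by
  rcases le_or_gt z 1 with h | h
  · have h2 : |(-z)| ≤ 1 := by rw [abs_neg, abs_of_nonneg hz]; exact h
    have := Real.abs_exp_sub_one_sub_id_le h2
    rw [neg_sq] at this
    calc Real.exp (-z) - 1 + z = Real.exp (-z) - 1 - (-z) := by ring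
    _ ≤ |Real.exp (-z) - 1 - (-z)| := le_abs_self _
    _ ≤ z ^ 2 := this
  · have he : Real.exp (-z) ≤ 1 := Real.exp_le_one_iff.mpr (by linarith)
    nlinarith

/-- The integrand in the Lévy–Khintchine formula. -/
noncomputable def gfun (l r : ℝ) : ℝ :=
  Real.exp (-l * r) - 1 + (if r < 1 then l * r else 0)

lemma gfun_measurable (l : ℝ) : Measurable (gfun l) := by
  unfold gfun
  apply Measurable.add
  · exact ((Real.continuous_exp.comp (continuous_const.mul continuous_id)).measurable).sub
      measurable_const
  · exact Measurable.ite measurableSet_Iio (measurable_const.mul measurable_id) measurable_const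

lemma gfun_abs_le {l r : ℝ} (hl : 0 ≤ l) (hr : 0 < r) :
    |gfun l r| ≤ max 1 (l ^ 2) * min 1 (r ^ 2) := by
  unfold gfun
  rcases lt_or_ge r 1 with h1 | h1
  · rw [if_pos h1, min_eq_right (by nlinarith)]
    have hz : 0 ≤ l * r := mul_nonneg hl hr.le
    have hlow := exp_est_nonneg hz
    have hup := exp_est_le_sq hz
    rw [neg_mul] at *
    rw [abs_of_nonneg hlow]
    calc Real.exp (-(l*r)) - 1 + l * r ≤ (l*r)^2 := hup
    _ = l^2 * r^2 := by ring
    _ ≤ max 1 (l^2) * r^2 := by nlinarith [le_max_right 1 (l^2), sq_nonneg r]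
  · rw [if_neg (not_lt.mpr h1), min_eq_left (by nlinarith), add_zero, mul_one]
    have hz : 0 ≤ l * r := mul_nonneg hl (by linarith)
    have he1 : Real.exp (-l * r) ≤ 1 := Real.exp_le_one_iff.mpr (by rw [neg_mul]; linarith)
    have he0 : 0 < Real.exp (-l * r) := Real.exp_pos _
    rw [abs_of_nonpos (by linarith)]
    have : -(Real.exp (-l*r) - 1) ≤ 1 := by linarith
    exact this.trans (le_max_left _ _)

lemma gfun_hasDerivAt (r l : ℝ) :
    HasDerivAt (fun l => gfun l r) (-r * Real.exp (-l * r) + if r < 1 then r else 0) l := by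
  have h1 : HasDerivAt (fun l : ℝ => -l * r) (-r) l := by
    simpa using ((hasDerivAt_id l).neg.mul_const r)
  have h2 : HasDerivAt (fun l : ℝ => Real.exp (-l * r)) (Real.exp (-l * r) * (-r)) l := h1.exp
  have h3 : HasDerivAt (fun l : ℝ => (if r < 1 then l * r else 0)) (if r < 1 then r else 0) l := by
    rcases lt_or_ge r 1 with h | h
    · simp only [if_pos h]; simpa using (hasDerivAt_id l).mul_const r
    · simp only [if_neg (not_lt.mpr h)]; exact hasDerivAt_const l 0
  have := (h2.sub_const 1).add h3
  exact this.congr_deriv (by ring)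

lemma gfun_deriv_bound {eps M l r : ℝ} (heps : 0 < eps) (hl : l ∈ Icc eps M) (hr : 0 < r) :
    |(-r * Real.exp (-l * r) + if r < 1 then r else 0)| ≤ max M eps⁻¹ * min 1 (r ^ 2) := by
  obtain ⟨hle, hlM⟩ := hl
  have hl0 : 0 < l := lt_of_lt_of_le heps hle
  rcases lt_or_ge r 1 with h1 | h1
  · rw [if_pos h1, min_eq_right (by nlinarith)]
    have key : -r * Real.exp (-l * r) + r = r * (1 - Real.exp (-(l * r))) := by
      rw [neg_mul]; ring
    rw [key, abs_of_nonneg]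
    · have h2 : 1 - Real.exp (-(l*r)) ≤ l * r := one_sub_exp_le _
      calc r * (1 - Real.exp (-(l*r))) ≤ r * (l * r) := by
            apply mul_le_mul_of_nonneg_left h2 hr.le
      _ = l * r^2 := by ring
      _ ≤ max M eps⁻¹ * r^2 := by nlinarith [le_max_left M eps⁻¹, sq_nonneg r]
    · have : Real.exp (-(l*r)) ≤ 1 := Real.exp_le_one_iff.mpr (by nlinarith)
      nlinarith
  · rw [if_neg (not_lt.mpr h1), min_eq_left (by nlinarith), add_zero, neg_mul, abs_neg, abs_mul,
      abs_of_nonneg hr.le, abs_of_pos (Real.exp_pos _), mul_one]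
    have key : r * Real.exp (-l * r) ≤ eps⁻¹ := by
      have h2 : Real.exp (-l * r) ≤ Real.exp (-eps * r) := by
        apply Real.exp_le_exp.mpr; nlinarith
      have h3 : eps * r ≤ Real.exp (eps * r) := by
        have := Real.add_one_le_exp (eps * r); linarith
      have h4 : Real.exp (-eps * r) = (Real.exp (eps * r))⁻¹ := by
        rw [neg_mul, Real.exp_neg]
      have h5 : r * Real.exp (-eps * r) ≤ eps⁻¹ := by
        rw [h4, ← div_eq_mul_inv, div_le_iff₀ (Real.exp_pos _)]
        nlinarith [mul_inv_cancel₀ heps.ne', inv_pos.mpr heps,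
          mul_le_mul_of_nonneg_left h3 (inv_pos.mpr heps).le]
      calc r * Real.exp (-l * r) ≤ r * Real.exp (-eps * r) := by
            apply mul_le_mul_of_nonneg_left h2 (by linarith)
      _ ≤ eps⁻¹ := h5
    exact key.trans (le_max_right _ _)

lemma gfun_lip {eps M x y r : ℝ} (heps : 0 < eps) (hx : x ∈ Icc eps M) (hy : y ∈ Icc eps M)
    (hr : 0 < r) : |gfun x r - gfun y r| ≤ max M eps⁻¹ * min 1 (r ^ 2) * |x - y| := by
  have := Convex.norm_image_sub_le_of_norm_hasDerivWithin_le
    (f := fun l => gfun l r)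
    (f' := fun l => -r * Real.exp (-l * r) + if r < 1 then r else 0)
    (C := max M eps⁻¹ * min 1 (r ^ 2)) (s := Icc eps M)
    (fun l hl => (gfun_hasDerivAt r l).hasDerivWithinAt)
    (fun l hl => by
      rw [Real.norm_eq_abs]; exact gfun_deriv_bound heps hl hr)
    (convex_Icc _ _) hy hx
  rw [Real.norm_eq_abs, Real.norm_eq_abs] at this
  exact this


lemma minsq_integrable {piM : Measure ℝ}
    (hI : (∫⁻ r, ENNReal.ofReal (min 1 (r ^ 2)) ∂piM) < ⊤) :
    Integrable (fun r => min 1 (r ^ 2)) piM := by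
  constructor
  · exact (measurable_const.min (measurable_id.pow_const 2)).aestronglyMeasurable
  · rw [hasFiniteIntegral_iff_ofReal]
    · exact hI
    · exact ae_of_all _ (fun r => le_min zero_le_one (sq_nonneg r))

lemma gfun_integrable {piM : Measure ℝ} (hsupp : piM (Set.Ioi (0:ℝ))ᶜ = 0)
    (hI : (∫⁻ r, ENNReal.ofReal (min 1 (r ^ 2)) ∂piM) < ⊤) {l : ℝ} (hl : 0 ≤ l) :
    Integrable (gfun l) piM := by
  have hae : ∀ᵐ r ∂piM, r ∈ Set.Ioi (0:ℝ) := by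
    rw [ae_iff]
    exact hsupp
  apply Integrable.mono' ((minsq_integrable hI).const_mul (max 1 (l ^ 2)))
    (gfun_measurable l).aestronglyMeasurable
  filter_upwards [hae] with r hr
  rw [Real.norm_eq_abs]
  exact gfun_abs_le hl hr

/-- The branching mechanism is Lipschitz on `[ε, M]`. -/
lemma psi_lipschitzOnWith {Ψ : ℝ → ℝ} {a b : ℝ} {piM : Measure ℝ}
    (hbm : IsBranchingMechanism Ψ a b piM) {eps M : ℝ} (heps : 0 < eps) :
    ∃ K : ℝ≥0, LipschitzOnWith K Ψ (Icc eps M) := by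
  obtain ⟨hb, hsupp, hI, hshape⟩ := hbm
  rcases lt_or_ge M eps with hM | hM
  · exact ⟨1, LipschitzOnWith.of_dist_le_mul fun x hx y hy =>
      absurd (hx.1.trans hx.2) (not_le.mpr hM)⟩
  have hM0 : 0 < M := heps.trans_le hM
  set Ir : ℝ := (∫ r, min 1 (r ^ 2) ∂piM) with hIr
  have hIr0 : 0 ≤ Ir := integral_nonneg (fun r => le_min zero_le_one (sq_nonneg r))
  set Kr : ℝ := |a| + b * (2 * M) + max M eps⁻¹ * Ir with hKr
  have hKr0 : 0 ≤ Kr := by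
    have h1 : (0:ℝ) ≤ max M eps⁻¹ := le_max_of_le_right (by positivity)
    have h2 : (0:ℝ) ≤ b * (2 * M) := by positivity
    positivity
  refine ⟨Real.toNNReal Kr, LipschitzOnWith.of_dist_le_mul fun x hx y hy => ?_⟩
  rw [Real.coe_toNNReal _ hKr0, Real.dist_eq, Real.dist_eq]
  have hx0 : 0 ≤ x := (heps.trans_le hx.1).le
  have hy0 : 0 ≤ y := (heps.trans_le hy.1).le
  rw [hshape x hx0, hshape y hy0]
  unfold psiShape
  have hintx : Integrable (gfun x) piM := gfun_integrable hsupp hI hx0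
  have hinty : Integrable (gfun y) piM := gfun_integrable hsupp hI hy0
  have hdiff : (∫ r, gfun x r ∂piM) - (∫ r, gfun y r ∂piM) = ∫ r, gfun x r - gfun y r ∂piM :=
    (integral_sub hintx hinty).symm
  have hintbound : |∫ r, gfun x r - gfun y r ∂piM| ≤ max M eps⁻¹ * Ir * |x - y| := by
    have hae : ∀ᵐ r ∂piM, r ∈ Set.Ioi (0:ℝ) := by
      rw [ae_iff]; exact hsupp
    have h1 : |∫ r, gfun x r - gfun y r ∂piM| ≤
        ∫ r, max M eps⁻¹ * min 1 (r ^ 2) * |x - y| ∂piM := by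
      rw [← Real.norm_eq_abs]
      apply norm_integral_le_of_norm_le (((minsq_integrable hI).const_mul
        (max M eps⁻¹)).mul_const (|x - y|))
      filter_upwards [hae] with r hr
      rw [Real.norm_eq_abs]
      exact gfun_lip heps hx hy hr
    have h2 : ∫ r, max M eps⁻¹ * min 1 (r ^ 2) * |x - y| ∂piM
        = max M eps⁻¹ * Ir * |x - y| := by
      rw [integral_mul_const, integral_const_mul]
    rw [h2] at h1; exact h1
  have habs : ∀ u v w : ℝ, |u + v + w| ≤ |u| + |v| + |w| := fun u v w => abs_add_three u v w
  have key : a * x + b * x ^ 2 + (∫ r, gfun x r ∂piM)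
      - (a * y + b * y ^ 2 + ∫ r, gfun y r ∂piM)
      = a * (x - y) + b * (x ^ 2 - y ^ 2) + ∫ r, gfun x r - gfun y r ∂piM := by
    rw [← hdiff]; ring
  have : |a * (x - y) + b * (x ^ 2 - y ^ 2) + ∫ r, gfun x r - gfun y r ∂piM|
      ≤ Kr * |x - y| := by
    have e1 : |a * (x - y)| = |a| * |x - y| := abs_mul _ _
    have e2 : |b * (x ^ 2 - y ^ 2)| ≤ b * (2 * M) * |x - y| := by
      rw [abs_mul, abs_of_nonneg hb]
      have : |x ^ 2 - y ^ 2| = |x + y| * |x - y| := by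
        rw [← abs_mul]; congr 1; ring
      rw [this, ← mul_assoc]
      apply mul_le_mul_of_nonneg_right _ (abs_nonneg _)
      have : |x + y| ≤ 2 * M := by
        rw [abs_of_nonneg (by linarith)]
        linarith [hx.2, hy.2]
      nlinarith [abs_nonneg (x + y)]
    calc |a * (x - y) + b * (x ^ 2 - y ^ 2) + ∫ r, gfun x r - gfun y r ∂piM|
        ≤ |a * (x - y)| + |b * (x ^ 2 - y ^ 2)| + |∫ r, gfun x r - gfun y r ∂piM| :=
          habs _ _ _
      _ ≤ |a| * |x - y| + b * (2 * M) * |x - y| + max M eps⁻¹ * Ir * |x - y| := by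
          rw [e1]; exact add_le_add (add_le_add le_rfl e2) hintbound
      _ = Kr * |x - y| := by rw [hKr]; ring
  calc |a * x + b * x ^ 2 + (∫ r, gfun x r ∂piM)
      - (a * y + b * y ^ 2 + ∫ r, gfun y r ∂piM)| = |a * (x - y) + b * (x ^ 2 - y ^ 2)
        + ∫ r, gfun x r - gfun y r ∂piM| := by rw [key]
    _ ≤ Kr * |x - y| := this



lemma flow_semigroup {Ψ : ℝ → ℝ} {u : ℝ → ℝ → ℝ}
    (hlip : ∀ eps M : ℝ, 0 < eps → ∃ K : ℝ≥0, LipschitzOnWith K Ψ (Icc eps M))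
    (hu : IsFlow Ψ u) {l : ℝ} (hl : 0 < l) {t : ℝ} (ht : 0 ≤ t) {s : ℝ} (hs : 0 ≤ s) :
    u (t + s) l = u s (u t l) := by
  obtain ⟨hu0, hupos, hud⟩ := hu
  have hul : 0 < u t l := hupos l hl t ht
  set φ : ℝ → ℝ := fun τ => u (t + τ) l with hφ
  set ψ : ℝ → ℝ := fun τ => u τ (u t l) with hψ
  -- derivatives
  have hφd : ∀ τ, 0 ≤ τ → ∀ S : Set ℝ, S ⊆ Ici 0 →
      HasDerivWithinAt φ (-(Ψ (φ τ))) S τ := by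
    intro τ hτ S hS
    have houter : HasDerivWithinAt (fun σ => u σ l) (-(Ψ (u (t + τ) l))) (Ici 0) (t + τ) :=
      hud l hl (t + τ) (by linarith)
    have hinner : HasDerivWithinAt (fun σ : ℝ => t + σ) 1 S τ :=
      ((hasDerivAt_id τ).const_add t).hasDerivWithinAt
    have hmaps : MapsTo (fun σ : ℝ => t + σ) S (Ici 0) := by
      intro σ hσ
      have : 0 ≤ σ := hS hσ
      simp only [mem_Ici]; linarith
    have := HasDerivWithinAt.comp τ houter hinner hmaps
    rw [mul_one] at this
    exact this
  have hψd : ∀ τ, 0 ≤ τ → ∀ S : Set ℝ, S ⊆ Ici 0 →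
      HasDerivWithinAt ψ (-(Ψ (ψ τ))) S τ := by
    intro τ hτ S hS
    exact (hud (u t l) hul τ hτ).mono hS
  -- continuity
  have hφc : ContinuousOn φ (Icc 0 s) := fun τ hτ =>
    (hφd τ hτ.1 (Icc 0 s) (fun σ hσ => hσ.1)).continuousWithinAt
  have hψc : ContinuousOn ψ (Icc 0 s) := fun τ hτ =>
    (hψd τ hτ.1 (Icc 0 s) (fun σ hσ => hσ.1)).continuousWithinAt
  have hne : (Icc (0:ℝ) s).Nonempty := ⟨0, le_refl 0, hs⟩
  -- extrema
  obtain ⟨aφ, haφ, hminφ⟩ := isCompact_Icc.exists_isMinOn hne hφc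
  obtain ⟨aψ, haψ, hminψ⟩ := isCompact_Icc.exists_isMinOn hne hψc
  obtain ⟨bφ, hbφ, hmaxφ⟩ := isCompact_Icc.exists_isMaxOn hne hφc
  obtain ⟨bψ, hbψ, hmaxψ⟩ := isCompact_Icc.exists_isMaxOn hne hψc
  set eps : ℝ := min (φ aφ) (ψ aψ) with heps'
  set M : ℝ := max (φ bφ) (ψ bψ) with hM'
  have hepspos : 0 < eps := by
    apply lt_min
    · exact hupos l hl _ (by linarith [haφ.1])
    · exact hupos (u t l) hul _ haψ.1
  have hmemφ : ∀ τ ∈ Icc 0 s, φ τ ∈ Icc eps M := fun τ hτ =>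
    ⟨le_trans (min_le_left _ _) (hminφ hτ), le_trans (hmaxφ hτ) (le_max_left _ _)⟩
  have hmemψ : ∀ τ ∈ Icc 0 s, ψ τ ∈ Icc eps M := fun τ hτ =>
    ⟨le_trans (min_le_right _ _) (hminψ hτ), le_trans (hmaxψ hτ) (le_max_right _ _)⟩
  obtain ⟨K, hK⟩ := hlip eps M hepspos
  have hKneg : ∀ τ : ℝ, LipschitzOnWith K (fun y => -(Ψ y)) (Icc eps M) := by
    intro τ
    apply LipschitzOnWith.of_dist_le_mul
    intro x hx y hy
    rw [dist_neg_neg]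
    exact hK.dist_le_mul x hx y hy
  have key := ODE_solution_unique_of_mem_Icc_right (v := fun _ y => -(Ψ y))
    (s := fun _ => Icc eps M) (fun τ _ => hKneg τ) hφc
    (fun τ hτ => hφd τ hτ.1 (Ici τ) (Ici_subset_Ici.mpr hτ.1))
    (fun τ hτ => hmemφ τ ⟨hτ.1, hτ.2.le⟩) hψc
    (fun τ hτ => hψd τ hτ.1 (Ici τ) (Ici_subset_Ici.mpr hτ.1))
    (fun τ hτ => hmemψ τ ⟨hτ.1, hτ.2.le⟩)
    (by simp only [hφ, hψ, add_zero]; exact (hu0 (u t l) hul).symm)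
  exact key (right_mem_Icc.mpr hs)



/-- `W l r = 1 - e^{-l r}` with the convention `e^{-l·∞} = 0`, as an `ℝ≥0∞`-valued function. -/
noncomputable def Wfun (l : ℝ) (r : ℝ≥0∞) : ℝ≥0∞ :=
  if r = ⊤ then 1 else ENNReal.ofReal (1 - Real.exp (-l * r.toReal))

/-- `G l r = e^{-l r}` with the convention `e^{-l·∞} = 0`, as an `ℝ≥0∞`-valued function. -/
noncomputable def Gfun (l : ℝ) (r : ℝ≥0∞) : ℝ≥0∞ :=
  if r = ⊤ then 0 else ENNReal.ofReal (Real.exp (-l * r.toReal))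

/-- `F l r = e^{-l r}` with the convention `e^{-l·∞} = 0`, as a real-valued function. -/
noncomputable def Ffun (l : ℝ) (r : ℝ≥0∞) : ℝ :=
  if r = ⊤ then 0 else Real.exp (-l * r.toReal)

lemma measurable_Wfun (l : ℝ) : Measurable (Wfun l) := by
  unfold Wfun
  apply Measurable.ite (measurableSet_singleton ⊤) measurable_const
  exact ENNReal.measurable_ofReal.comp ((measurable_const.sub
    ((Real.continuous_exp.measurable).comp
      (measurable_const.mul ENNReal.measurable_toReal))))

lemma measurable_Gfun (l : ℝ) : Measurable (Gfun l) := by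
  unfold Gfun
  apply Measurable.ite (measurableSet_singleton ⊤) measurable_const
  exact ENNReal.measurable_ofReal.comp ((Real.continuous_exp.measurable).comp
    (measurable_const.mul ENNReal.measurable_toReal))

lemma measurable_Ffun (l : ℝ) : Measurable (Ffun l) := by
  unfold Ffun
  apply Measurable.ite (measurableSet_singleton ⊤) measurable_const
  exact (Real.continuous_exp.measurable).comp (measurable_const.mul ENNReal.measurable_toReal)

lemma Ffun_nonneg (l : ℝ) (r : ℝ≥0∞) : 0 ≤ Ffun l r := by
  unfold Ffun; split
  · exact le_refl 0
  · exact (Real.exp_pos _).le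

lemma Ffun_le_one {l : ℝ} (hl : 0 ≤ l) (r : ℝ≥0∞) : Ffun l r ≤ 1 := by
  unfold Ffun; split
  · exact zero_le_one
  · exact Real.exp_le_one_iff.mpr (by
      have := ENNReal.toReal_nonneg (a := r); nlinarith)

lemma continuous_Ffun {l : ℝ} (hl : 0 < l) : Continuous (Ffun l) := by
  rw [continuous_iff_continuousAt]
  intro x
  by_cases hx : x = ⊤
  · subst hx
    unfold ContinuousAt
    have h0 : Ffun l ⊤ = 0 := by simp [Ffun]
    rw [h0, ← nhdsNE_sup_pure]
    rw [tendsto_sup]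
    constructor
    · -- within {⊤}ᶜ : toReal tends to atTop
      have h1 : Tendsto ENNReal.toReal (𝓝[≠] (⊤ : ℝ≥0∞)) atTop := by
        rw [tendsto_atTop]
        intro b
        have hmem : Ioi (ENNReal.ofReal (max b 0)) ∈ 𝓝 (⊤:ℝ≥0∞) :=
          Ioi_mem_nhds ENNReal.ofReal_lt_top
        filter_upwards [nhdsWithin_le_nhds hmem, self_mem_nhdsWithin] with r hr hr'
        have hb : max b 0 < r.toReal :=
          (ENNReal.ofReal_lt_iff_lt_toReal (le_max_right b 0) hr').mp hr
        exact le_trans (le_max_left b 0) hb.le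
      have h2 : Tendsto (fun y : ℝ => Real.exp (-l * y)) atTop (𝓝 0) := by
        have : Tendsto (fun y : ℝ => -l * y) atTop atBot :=
          Tendsto.const_mul_atTop_of_neg (by linarith) tendsto_id
        exact Real.tendsto_exp_atBot.comp this
      have h3 : Tendsto (fun r : ℝ≥0∞ => Real.exp (-l * r.toReal)) (𝓝[≠] ⊤) (𝓝 0) :=
        h2.comp h1
      apply h3.congr'
      filter_upwards [self_mem_nhdsWithin] with r hr
      have hrne : r ≠ ⊤ := hr
      simp only [Ffun, if_neg hrne]
    · -- pure ⊤
      rw [tendsto_pure_left]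
      intro sU hsU
      simpa [Ffun] using mem_of_mem_nhds hsU
  · have hev : ∀ᶠ y in 𝓝 x, Ffun l y = Real.exp (-l * y.toReal) := by
      have : {y : ℝ≥0∞ | y ≠ ⊤} ∈ 𝓝 x := isOpen_ne.mem_nhds hx
      filter_upwards [this] with y hy
      simp only [Ffun, if_neg hy]
    have hcont : ContinuousAt (fun y : ℝ≥0∞ => Real.exp (-l * y.toReal)) x := by
      apply (Real.continuous_exp.continuousAt).comp
      exact (continuousAt_const.mul (ENNReal.tendsto_toReal hx))
    exact hcont.congr (EventuallyEq.symm hev)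


lemma Wfun_le_one (l : ℝ) (r : ℝ≥0∞) : Wfun l r ≤ 1 := by
  unfold Wfun; split
  · exact le_refl 1
  · exact (ENNReal.ofReal_le_one).mpr (by nlinarith [Real.exp_pos (-l * ENNReal.toReal r)])

lemma Gfun_le_one {l : ℝ} (hl : 0 ≤ l) (r : ℝ≥0∞) : Gfun l r ≤ 1 := by
  unfold Gfun; split
  · exact zero_le_one
  · exact (ENNReal.ofReal_le_one).mpr (Real.exp_le_one_iff.mpr
      (by nlinarith [ENNReal.toReal_nonneg (a := r)]))

lemma ofReal_Ffun (l : ℝ) (r : ℝ≥0∞) : ENNReal.ofReal (Ffun l r) = Gfun l r := by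
  unfold Ffun Gfun; split <;> simp

lemma Wfun_mono {l l' : ℝ} (h : l ≤ l') (r : ℝ≥0∞) : Wfun l r ≤ Wfun l' r := by
  unfold Wfun; split
  · exact le_refl 1
  · apply ENNReal.ofReal_le_ofReal
    have : Real.exp (-l' * r.toReal) ≤ Real.exp (-l * r.toReal) := by
      apply Real.exp_le_exp.mpr
      nlinarith [ENNReal.toReal_nonneg (a := r)]
    linarith

lemma Wfun_one_mul_Gfun {l : ℝ} (hl : 0 ≤ l) (r : ℝ≥0∞) :
    Wfun 1 r * Gfun l r = Wfun (l + 1) r - Wfun l r := by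
  unfold Wfun Gfun
  by_cases hr : r = ⊤
  · simp [hr]
  · rw [if_neg hr, if_neg hr, if_neg hr, if_neg hr]
    set x := r.toReal with hx
    have hx0 : 0 ≤ x := ENNReal.toReal_nonneg
    have he1 : Real.exp (-1 * x) ≤ 1 := Real.exp_le_one_iff.mpr (by nlinarith)
    have hel : Real.exp (-l * x) ≤ 1 := Real.exp_le_one_iff.mpr (by nlinarith)
    have hel0 : (0:ℝ) < Real.exp (-l * x) := Real.exp_pos _
    have hmul : (1 - Real.exp (-1 * x)) * Real.exp (-l * x)
        = (1 - Real.exp (-(l+1) * x)) - (1 - Real.exp (-l * x)) := by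
      have hee : Real.exp (-(l+1) * x) = Real.exp (-l * x) * Real.exp (-1 * x) := by
        rw [← Real.exp_add]; ring_nf
      rw [hee]; ring
    rw [← ENNReal.ofReal_mul (by nlinarith), hmul,
      ENNReal.ofReal_sub _ (by nlinarith : (0:ℝ) ≤ 1 - Real.exp (-l * x))]

lemma Wfun_ne_top (l : ℝ) (r : ℝ≥0∞) : Wfun l r ≠ ⊤ :=
  fun h => by simpa [h] using (Wfun_le_one l r).trans_lt (by norm_num : (1:ℝ≥0∞) < ⊤) |>.ne h

lemma Wfun_one_pos {r : ℝ≥0∞} (hr : 0 < r) : 0 < Wfun 1 r := by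
  unfold Wfun; split
  · norm_num
  · rename_i hrt
    apply ENNReal.ofReal_pos.mpr
    have hx : 0 < r.toReal := ENNReal.toReal_pos hr.ne' hrt
    have : Real.exp (-1 * r.toReal) < 1 := by
      apply Real.exp_lt_one_iff.mpr; nlinarith
    linarith



section Kernel

variable {u : ℝ → ℝ → ℝ} {p : ℝ → ℝ≥0∞ → Measure ℝ≥0∞}

lemma lintegral_Gfun_p (hp : IsCSBPTransition u p) {t : ℝ} (ht : 0 ≤ t) {x : ℝ≥0∞}
    (hx : x ≠ ⊤) {l : ℝ} (hl : 0 < l) :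
    ∫⁻ r, Gfun l r ∂(p t x) = ENNReal.ofReal (Real.exp (-(x.toReal) * u t l)) := by
  rw [← lintegral_add_compl (Gfun l) (measurableSet_singleton (⊤ : ℝ≥0∞))]
  have h1 : ∫⁻ r in {(⊤:ℝ≥0∞)}, Gfun l r ∂(p t x) = 0 := by
    rw [lintegral_singleton' (measurable_Gfun l)]
    simp [Gfun]
  have h2 : ∫⁻ r in {(⊤:ℝ≥0∞)}ᶜ, Gfun l r ∂(p t x)
      = ∫⁻ r in {(⊤:ℝ≥0∞)}ᶜ, ENNReal.ofReal (Real.exp (-l * r.toReal)) ∂(p t x) := by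
    apply setLIntegral_congr_fun (measurableSet_singleton (⊤:ℝ≥0∞)).compl
    exact (fun r hr => by simp only [Gfun, if_neg (show r ≠ ⊤ from hr)])
  rw [h1, h2, zero_add]
  exact hp.2.1 t ht x hx l hl

lemma lintegral_Wfun_p (hp : IsCSBPTransition u p) {t : ℝ} (ht : 0 ≤ t) (x : ℝ≥0∞)
    {l : ℝ} (hl : 0 < l) :
    ∫⁻ r, Wfun l r ∂(p t x) = Wfun (u t l) x := by
  haveI := hp.1 t ht x
  by_cases hx : x = ⊤
  · subst hx
    rw [hp.2.2 t ht, lintegral_dirac' _ (measurable_Wfun l)]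
    simp [Wfun]
  · -- split the integral at ⊤
    rw [← lintegral_add_compl (Wfun l) (measurableSet_singleton (⊤ : ℝ≥0∞))]
    have h1 : ∫⁻ r in {(⊤:ℝ≥0∞)}, Wfun l r ∂(p t x) = p t x {⊤} := by
      rw [lintegral_singleton' (measurable_Wfun l)]
      simp [Wfun]
    set E : ℝ≥0∞ := ENNReal.ofReal (Real.exp (-(x.toReal) * u t l)) with hE
    have hGE : ∫⁻ r in {(⊤:ℝ≥0∞)}ᶜ, ENNReal.ofReal (Real.exp (-l * r.toReal)) ∂(p t x) = E :=
      hp.2.1 t ht x hx l hl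
    have h2 : ∫⁻ r in {(⊤:ℝ≥0∞)}ᶜ, Wfun l r ∂(p t x) = p t x {(⊤:ℝ≥0∞)}ᶜ - E := by
      have hcongr : ∫⁻ r in {(⊤:ℝ≥0∞)}ᶜ, Wfun l r ∂(p t x)
          = ∫⁻ r in {(⊤:ℝ≥0∞)}ᶜ, (1 - ENNReal.ofReal (Real.exp (-l * r.toReal))) ∂(p t x) := by
        apply setLIntegral_congr_fun (measurableSet_singleton (⊤:ℝ≥0∞)).compl
        intro r hr
        simp only [Wfun, if_neg (show r ≠ ⊤ from hr)]
        rw [ENNReal.ofReal_sub _ (Real.exp_pos _).le, ENNReal.ofReal_one]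
      have hGm : Measurable (fun r : ℝ≥0∞ => ENNReal.ofReal (Real.exp (-l * r.toReal))) :=
        ENNReal.measurable_ofReal.comp ((Real.continuous_exp.measurable).comp
          (measurable_const.mul ENNReal.measurable_toReal))
      rw [hcongr, lintegral_sub hGm]
      · rw [hGE, setLIntegral_one]
      · rw [hGE]; exact ENNReal.ofReal_ne_top
      · exact ae_of_all _ (fun r => ENNReal.ofReal_le_one.mpr (Real.exp_le_one_iff.mpr
          (by nlinarith [ENNReal.toReal_nonneg (a := r)])))
    rw [h1, h2]
    have hEle : E ≤ p t x {(⊤:ℝ≥0∞)}ᶜ := by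
      rw [← hGE]
      calc ∫⁻ r in {(⊤:ℝ≥0∞)}ᶜ, ENNReal.ofReal (Real.exp (-l * r.toReal)) ∂(p t x)
          ≤ ∫⁻ _ in {(⊤:ℝ≥0∞)}ᶜ, 1 ∂(p t x) := by
            apply lintegral_mono (fun r => ENNReal.ofReal_le_one.mpr
              (Real.exp_le_one_iff.mpr (by nlinarith [ENNReal.toReal_nonneg (a := r)])))
        _ = p t x {(⊤:ℝ≥0∞)}ᶜ := setLIntegral_one _
    have hW : Wfun (u t l) x = 1 - E := by
      rw [Wfun, if_neg hx, ENNReal.ofReal_sub _ (Real.exp_pos _).le, ENNReal.ofReal_one, hE,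
        show -u t l * x.toReal = -x.toReal * u t l by ring]
    rw [hW]
    apply ENNReal.eq_sub_of_add_eq (by rw [hE]; exact ENNReal.ofReal_ne_top)
    rw [add_assoc, tsub_add_cancel_of_le hEle,
      measure_add_measure_compl (measurableSet_singleton _), measure_univ]

lemma integral_Ffun_p (hp : IsCSBPTransition u p) {t : ℝ} (ht : 0 ≤ t) (x : ℝ≥0∞)
    {l : ℝ} (hl : 0 < l) :
    ∫ r, Ffun l r ∂(p t x) = if x = ⊤ then 0 else Real.exp (-(x.toReal) * u t l) := by
  haveI := hp.1 t ht x
  by_cases hx : x = ⊤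
  · subst hx
    rw [hp.2.2 t ht, integral_dirac]
    simp [Ffun]
  · rw [if_neg hx]
    rw [integral_eq_lintegral_of_nonneg_ae (ae_of_all _ (Ffun_nonneg l))
      (measurable_Ffun l).aestronglyMeasurable]
    have : ∀ r, ENNReal.ofReal (Ffun l r) = Gfun l r := ofReal_Ffun l
    simp_rw [this]
    rw [lintegral_Gfun_p hp ht hx hl, ENNReal.toReal_ofReal (Real.exp_pos _).le]

end Kernel

section SW

/-- The exponential test function as a continuous map on `[0,∞]`. -/
noncomputable def FCM (l : ℝ) (hl : 0 < l) : C(ℝ≥0∞, ℝ) := ⟨Ffun l, continuous_Ffun hl⟩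

/-- The generating set of exponential test functions. -/
def genSet : Set C(ℝ≥0∞, ℝ) := {f | ∃ l : ℝ, ∃ hl : 0 < l, f = FCM l hl}

lemma FCM_mul {l l' : ℝ} (hl : 0 < l) (hl' : 0 < l') :
    FCM l hl * FCM l' hl' = FCM (l + l') (by linarith) := by
  ext r
  simp only [ContinuousMap.mul_apply, FCM, ContinuousMap.coe_mk]
  unfold Ffun
  by_cases hr : r = ⊤
  · simp [hr]
  · rw [if_neg hr, if_neg hr, if_neg hr, ← Real.exp_add]
    ring_nf

/-- `insert 1 genSet` is a submonoid of `C([0,∞], ℝ)`. -/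
def genMonoid : Submonoid C(ℝ≥0∞, ℝ) where
  carrier := insert 1 genSet
  one_mem' := Or.inl rfl
  mul_mem' := by
    rintro f g (rfl | ⟨l, hl, rfl⟩) (rfl | ⟨l', hl', rfl⟩)
    · left; simp
    · right; rw [one_mul]; exact ⟨l', hl', rfl⟩
    · right; rw [mul_one]; exact ⟨l, hl, rfl⟩
    · right; rw [FCM_mul hl hl']; exact ⟨l + l', by linarith, rfl⟩

/-- Induction principle: a property closed under the module operations which holds for `1`
and the exponential functions holds on the adjoined algebra. -/
lemma adjoin_induction_P {P : C(ℝ≥0∞, ℝ) → Prop}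
    (h1 : P 1) (hS : ∀ f ∈ genSet, P f) (h0 : P 0)
    (hadd : ∀ f g, P f → P g → P (f + g)) (hsmul : ∀ (c : ℝ) f, P f → P (c • f)) :
    ∀ g ∈ Algebra.adjoin ℝ genSet, P g := by
  intro g hg
  have hg' : g ∈ Subalgebra.toSubmodule (Algebra.adjoin ℝ genSet) := hg
  rw [Algebra.adjoin_eq_span] at hg'
  refine Submodule.span_induction ?_ h0 (fun x y _ _ hx hy => hadd x y hx hy)
    (fun c x _ hx => hsmul c x hx) hg'
  intro x hx
  have : x ∈ genMonoid := by
    have hle : Submonoid.closure genSet ≤ genMonoid := Submonoid.closure_le.mpr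
      (fun f hf => Or.inr hf)
    exact hle hx
  rcases this with h | h
  · rw [h]; exact h1
  · exact hS x h

lemma genAlg_separatesPoints : (Algebra.adjoin ℝ genSet).SeparatesPoints := by
  intro x y hxy
  refine ⟨Ffun 1, ⟨FCM 1 one_pos, Algebra.subset_adjoin ⟨1, one_pos, rfl⟩, rfl⟩, ?_⟩
  unfold Ffun
  by_cases hx : x = ⊤
  · subst hx
    rw [if_pos rfl, if_neg (Ne.symm hxy)]
    exact (Real.exp_pos _).ne
  · by_cases hy : y = ⊤
    · subst hy
      rw [if_neg hx, if_pos rfl]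
      exact (Real.exp_pos _).ne'
    · rw [if_neg hx, if_neg hy]
      intro h
      apply hxy
      have h2 := congrArg Real.log h
      rw [Real.log_exp, Real.log_exp] at h2
      have h3 : x.toReal = y.toReal := by linarith
      exact (ENNReal.toReal_eq_toReal_iff' hx hy).mp h3

lemma contMap_integrable (g : C(ℝ≥0∞, ℝ)) (m : Measure ℝ≥0∞) [IsFiniteMeasure m] :
    Integrable (fun r => g r) m := (BoundedContinuousFunction.mkOfCompact g).integrable m

/-- Two finite measures on `[0,∞]` that integrate all exponential test functions and constants
equally are equal. -/
lemma measure_eq_of_integral_genSet_eq {m₁ m₂ : Measure ℝ≥0∞}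
    [IsFiniteMeasure m₁] [IsFiniteMeasure m₂]
    (h1 : (m₁ univ).toReal = (m₂ univ).toReal)
    (hF : ∀ g ∈ genSet, ∫ r, g r ∂m₁ = ∫ r, g r ∂m₂) : m₁ = m₂ := by
  -- first, equality of integrals for members of the adjoined algebra
  have hAlg : ∀ g ∈ Algebra.adjoin ℝ genSet, ∫ r, g r ∂m₁ = ∫ r, g r ∂m₂ := by
    apply adjoin_induction_P
    · simp only [ContinuousMap.coe_one, Pi.one_apply]
      rw [integral_const, integral_const, measureReal_def, measureReal_def, h1]
    · exact hF
    · simp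
    · intro f g hf hg
      simp only [ContinuousMap.coe_add, Pi.add_apply]
      rw [integral_add (contMap_integrable f m₁) (contMap_integrable g m₁),
        integral_add (contMap_integrable f m₂) (contMap_integrable g m₂), hf, hg]
    · intro c f hf
      simp only [ContinuousMap.coe_smul, Pi.smul_apply, smul_eq_mul]
      rw [integral_const_mul, integral_const_mul, hf]
  -- next, equality of integrals of all continuous functions
  have hCont : ∀ g : C(ℝ≥0∞, ℝ), ∫ r, g r ∂m₁ = ∫ r, g r ∂m₂ := by
    intro g
    have key : ∀ c : ℝ, 0 < c → |∫ r, g r ∂m₁ - ∫ r, g r ∂m₂| ≤ c := by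
      intro c hc
      set B : ℝ := (m₁ univ).toReal + (m₂ univ).toReal + 1 with hB
      have hB0 : 0 < B := by
        have h1' : 0 ≤ (m₁ univ).toReal := ENNReal.toReal_nonneg
        have h2' : 0 ≤ (m₂ univ).toReal := ENNReal.toReal_nonneg
        linarith
      obtain ⟨q, hq⟩ := ContinuousMap.exists_mem_subalgebra_near_continuousMap_of_separatesPoints
        (Algebra.adjoin ℝ genSet) genAlg_separatesPoints g (c / B) (by positivity)
      have hqmem := q.2
      have hint : ∀ (m : Measure ℝ≥0∞) [IsFiniteMeasure m],
          |∫ r, ((q : C(ℝ≥0∞, ℝ)) r - g r) ∂m| ≤ (c / B) * (m univ).toReal := by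
        intro m hm
        rw [← Real.norm_eq_abs]
        apply norm_integral_le_of_norm_le_const
        apply ae_of_all
        intro r
        calc ‖(q : C(ℝ≥0∞, ℝ)) r - g r‖ = ‖((q : C(ℝ≥0∞, ℝ)) - g) r‖ := by
              simp
        _ ≤ ‖(q : C(ℝ≥0∞, ℝ)) - g‖ := ContinuousMap.norm_coe_le_norm _ r
        _ ≤ c / B := hq.le
      have hsub : ∀ (m : Measure ℝ≥0∞) [IsFiniteMeasure m],
          ∫ r, ((q : C(ℝ≥0∞, ℝ)) r - g r) ∂m
            = (∫ r, (q : C(ℝ≥0∞, ℝ)) r ∂m) - ∫ r, g r ∂m := by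
        intro m hm
        exact integral_sub (contMap_integrable _ m) (contMap_integrable g m)
      have hq12 := hAlg (q : C(ℝ≥0∞, ℝ)) hqmem
      have e1 := hint m₁; have e2 := hint m₂
      rw [hsub m₁] at e1; rw [hsub m₂] at e2
      have hcB1 : (c / B) * (m₁ univ).toReal + (c / B) * (m₂ univ).toReal ≤ c := by
        rw [← mul_add]
        rw [div_mul_eq_mul_div, div_le_iff₀ hB0] at *
        nlinarith [ENNReal.toReal_nonneg (a := m₁ univ), ENNReal.toReal_nonneg (a := m₂ univ)]
      have habs : |∫ r, g r ∂m₁ - ∫ r, g r ∂m₂|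
          ≤ |(∫ r, (q:C(ℝ≥0∞,ℝ)) r ∂m₁) - ∫ r, g r ∂m₁|
            + |(∫ r, (q:C(ℝ≥0∞,ℝ)) r ∂m₂) - ∫ r, g r ∂m₂| := by
        rw [show (∫ r, g r ∂m₁) - ∫ r, g r ∂m₂
            = ((∫ r, (q:C(ℝ≥0∞,ℝ)) r ∂m₂) - ∫ r, g r ∂m₂)
              - ((∫ r, (q:C(ℝ≥0∞,ℝ)) r ∂m₁) - ∫ r, g r ∂m₁) from by rw [← hq12]; ring]
        rw [abs_sub_comm]
        exact (abs_sub _ _)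
      calc |∫ r, g r ∂m₁ - ∫ r, g r ∂m₂|
          ≤ |(∫ r, (q:C(ℝ≥0∞,ℝ)) r ∂m₁) - ∫ r, g r ∂m₁|
            + |(∫ r, (q:C(ℝ≥0∞,ℝ)) r ∂m₂) - ∫ r, g r ∂m₂| := habs
        _ ≤ (c / B) * (m₁ univ).toReal + (c / B) * (m₂ univ).toReal := add_le_add e1 e2
        _ ≤ c := hcB1
    by_contra hne
    have h0 : 0 < |∫ r, g r ∂m₁ - ∫ r, g r ∂m₂| := abs_pos.mpr (sub_ne_zero.mpr hne)
    have := key (|∫ r, g r ∂m₁ - ∫ r, g r ∂m₂| / 2) (by positivity)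
    linarith
  -- conclude via bounded continuous ℝ≥0-valued functions
  apply ext_of_forall_lintegral_eq_of_IsFiniteMeasure
  intro f
  have hg : Continuous fun r : ℝ≥0∞ => ((f r : ℝ≥0) : ℝ) :=
    NNReal.continuous_coe.comp f.continuous
  have hnn : ∀ (m : Measure ℝ≥0∞) [IsFiniteMeasure m],
      ∫⁻ r, (f r : ℝ≥0∞) ∂m = ENNReal.ofReal (∫ r, ((f r : ℝ≥0) : ℝ) ∂m) := by
    intro m hm
    have hcoe : ∀ r : ℝ≥0∞, ((f r : ℝ≥0) : ℝ≥0∞) = ENNReal.ofReal ((f r : ℝ≥0) : ℝ) :=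
      fun r => ENNReal.ofReal_coe_nnreal.symm
    simp_rw [hcoe]
    exact (ofReal_integral_eq_lintegral_ofReal (contMap_integrable ⟨_, hg⟩ m)
      (ae_of_all _ (fun r => NNReal.coe_nonneg _))).symm
  rw [hnn m₁, hnn m₂]
  exact congrArg ENNReal.ofReal (hCont ⟨_, hg⟩)

end SW

lemma lintegral_bcf_eq (m : Measure ℝ≥0∞) [IsFiniteMeasure m] (f : BoundedContinuousFunction ℝ≥0∞ ℝ≥0) :
    ∫⁻ r, (f r : ℝ≥0∞) ∂m = ENNReal.ofReal (∫ r, ((f r : ℝ≥0) : ℝ) ∂m) := by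
  have hg : Continuous fun r : ℝ≥0∞ => ((f r : ℝ≥0) : ℝ) :=
    NNReal.continuous_coe.comp f.continuous
  have hcoe : ∀ r : ℝ≥0∞, ((f r : ℝ≥0) : ℝ≥0∞) = ENNReal.ofReal ((f r : ℝ≥0) : ℝ) :=
    fun r => ENNReal.ofReal_coe_nnreal.symm
  simp_rw [hcoe]
  exact (ofReal_integral_eq_lintegral_ofReal (contMap_integrable ⟨_, hg⟩ m)
    (ae_of_all _ (fun r => NNReal.coe_nonneg _))).symm

section KernelMeasurable

variable {u : ℝ → ℝ → ℝ} {p : ℝ → ℝ≥0∞ → Measure ℝ≥0∞}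

lemma measurable_integral_contMap (hp : IsCSBPTransition u p) {t : ℝ} (ht : 0 ≤ t)
    (g : C(ℝ≥0∞, ℝ)) : Measurable fun x => ∫ r, g r ∂(p t x) := by
  haveI : ∀ x, IsProbabilityMeasure (p t x) := fun x => hp.1 t ht x
  have hAlg : ∀ q ∈ Algebra.adjoin ℝ genSet,
      Measurable fun x => ∫ r, (q : C(ℝ≥0∞, ℝ)) r ∂(p t x) := by
    apply adjoin_induction_P
    · have he : (fun x => ∫ r, (1 : C(ℝ≥0∞, ℝ)) r ∂(p t x)) = fun _ => (1:ℝ) := by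
        funext x
        simp only [ContinuousMap.coe_one, Pi.one_apply]
        rw [integral_const, probReal_univ]; simp
      rw [he]; exact measurable_const
    · rintro f ⟨l, hl, rfl⟩
      have he : (fun x => ∫ r, (FCM l hl) r ∂(p t x))
          = fun x => if x = ⊤ then 0 else Real.exp (-(x.toReal) * u t l) := by
        funext x
        exact integral_Ffun_p hp ht x hl
      rw [he]
      apply Measurable.ite (measurableSet_singleton ⊤) measurable_const
      exact (Real.continuous_exp.measurable).comp
        ((ENNReal.measurable_toReal.neg).mul_const _)
    · simp only [ContinuousMap.coe_zero, Pi.zero_apply, integral_zero]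
      exact measurable_const
    · intro f g hf hg
      have he : (fun x => ∫ r, (f + g : C(ℝ≥0∞, ℝ)) r ∂(p t x))
          = fun x => (∫ r, f r ∂(p t x)) + ∫ r, g r ∂(p t x) := by
        funext x
        simp only [ContinuousMap.coe_add, Pi.add_apply]
        exact integral_add (contMap_integrable f _) (contMap_integrable g _)
      rw [he]; exact hf.add hg
    · intro c f hf
      have he : (fun x => ∫ r, (c • f : C(ℝ≥0∞, ℝ)) r ∂(p t x))
          = fun x => c * ∫ r, f r ∂(p t x) := by
        funext x
        simp only [ContinuousMap.coe_smul, Pi.smul_apply, smul_eq_mul]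
        exact integral_const_mul c _
      rw [he]; exact hf.const_mul c
  have happrox : ∀ n : ℕ, ∃ q : C(ℝ≥0∞, ℝ), q ∈ Algebra.adjoin ℝ genSet
      ∧ ‖q - g‖ < 1/(n+1) := by
    intro n
    obtain ⟨q, hq⟩ := ContinuousMap.exists_mem_subalgebra_near_continuousMap_of_separatesPoints
      (Algebra.adjoin ℝ genSet) genAlg_separatesPoints g (1/(n+1)) (by positivity)
    exact ⟨q, q.2, hq⟩
  choose q hqmem hqnorm using happrox
  apply measurable_of_tendsto_metrizable (fun n => hAlg (q n) (hqmem n))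
  rw [tendsto_pi_nhds]
  intro x
  rw [tendsto_iff_dist_tendsto_zero]
  have hdist : ∀ n : ℕ, dist (∫ r, q n r ∂(p t x)) (∫ r, g r ∂(p t x)) ≤ 1/(n+1) := by
    intro n
    rw [dist_eq_norm, ← integral_sub (contMap_integrable _ _) (contMap_integrable g _)]
    have hbd := norm_integral_le_of_norm_le_const (μ := p t x)
      (f := fun r => q n r - g r) (C := 1/(n+1)) (ae_of_all _ (fun r => by
        calc ‖q n r - g r‖ = ‖(q n - g) r‖ := by simp
        _ ≤ ‖q n - g‖ := ContinuousMap.norm_coe_le_norm _ r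
        _ ≤ 1/(n+1) := (hqnorm n).le))
    rw [probReal_univ] at hbd
    simpa using hbd
  exact squeeze_zero (fun n => dist_nonneg) hdist tendsto_one_div_add_atTop_nhds_zero_nat

lemma measurable_lintegral_bcf (hp : IsCSBPTransition u p) {t : ℝ} (ht : 0 ≤ t)
    (f : BoundedContinuousFunction ℝ≥0∞ ℝ≥0) : Measurable fun x => ∫⁻ r, (f r : ℝ≥0∞) ∂(p t x) := by
  haveI : ∀ x, IsProbabilityMeasure (p t x) := fun x => hp.1 t ht x
  have he : (fun x => ∫⁻ r, (f r : ℝ≥0∞) ∂(p t x))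
      = fun x => ENNReal.ofReal (∫ r, ((f r : ℝ≥0) : ℝ) ∂(p t x)) := by
    funext x; exact lintegral_bcf_eq (p t x) f
  rw [he]
  exact ENNReal.measurable_ofReal.comp (measurable_integral_contMap hp ht
    ⟨_, NNReal.continuous_coe.comp f.continuous⟩)

lemma measurable_p (hp : IsCSBPTransition u p) {t : ℝ} (ht : 0 ≤ t) : Measurable (p t) := by
  haveI : ∀ x, IsProbabilityMeasure (p t x) := fun x => hp.1 t ht x
  apply Measure.measurable_of_measurable_coe
  have hgen : (inferInstance : MeasurableSpace ℝ≥0∞)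
      = MeasurableSpace.generateFrom {s : Set ℝ≥0∞ | IsClosed s} :=
    BorelSpace.measurable_eq.trans borel_eq_generateFrom_isClosed
  intro A hA
  refine MeasurableSpace.induction_on_inter (C := fun A _ => Measurable fun x => p t x A)
    hgen isPiSystem_isClosed ?_ ?_ ?_ ?_ A hA
  · simp only [measure_empty]; exact measurable_const
  · intro F hF
    have hFc : IsClosed F := hF
    have happ : ∀ x, Tendsto (fun n => ∫⁻ r, (hFc.apprSeq n r : ℝ≥0∞) ∂(p t x)) atTop
        (𝓝 (p t x F)) := fun x => HasOuterApproxClosed.tendsto_lintegral_apprSeq hFc (p t x)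
    exact ENNReal.measurable_of_tendsto (fun n => measurable_lintegral_bcf hp ht _)
      (tendsto_pi_nhds.mpr happ)
  · intro B hB hBm
    have he : (fun x => p t x Bᶜ) = fun x => 1 - p t x B := by
      funext x
      rw [measure_compl hB (measure_ne_top _ _), measure_univ]
    rw [he]
    exact measurable_const.sub hBm
  · intro f hdisj hfm hC
    have he : (fun x => p t x (⋃ i, f i)) = fun x => ∑' i, p t x (f i) := by
      funext x
      exact measure_iUnion hdisj hfm
    rw [he]
    exact Measurable.ennreal_tsum hC

end KernelMeasurable

/-- Uniqueness: two measures on `(0,∞]` with the same finite `W`-transforms agree on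
Borel subsets of `(0,∞]`. -/
lemma levy_uniqueness {m₁ m₂ : Measure ℝ≥0∞}
    (hT : ∀ l : ℝ, 0 < l → ∫⁻ r, Wfun l r ∂m₁ = ∫⁻ r, Wfun l r ∂m₂)
    (hfin : ∀ l : ℝ, 0 < l → ∫⁻ r, Wfun l r ∂m₁ ≠ ⊤) :
    ∀ A : Set ℝ≥0∞, MeasurableSet A → A ⊆ Set.Ioi 0 → m₁ A = m₂ A := by
  set n₁ := m₁.withDensity (Wfun 1) with hn₁
  set n₂ := m₂.withDensity (Wfun 1) with hn₂
  have hmass : ∀ (m : Measure ℝ≥0∞), (m.withDensity (Wfun 1)) univ = ∫⁻ r, Wfun 1 r ∂m := by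
    intro m
    rw [withDensity_apply _ MeasurableSet.univ, setLIntegral_univ]
  haveI hf1 : IsFiniteMeasure n₁ := by
    constructor; rw [hn₁, hmass]; exact (hfin 1 one_pos).lt_top
  haveI hf2 : IsFiniteMeasure n₂ := by
    constructor; rw [hn₂, hmass, ← hT 1 one_pos]; exact (hfin 1 one_pos).lt_top
  have hG : ∀ l : ℝ, 0 < l → ∫⁻ r, Gfun l r ∂n₁ = ∫⁻ r, Gfun l r ∂n₂ := by
    intro l hl
    have e : ∀ (m : Measure ℝ≥0∞), ∫⁻ r, Gfun l r ∂(m.withDensity (Wfun 1))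
        = ∫⁻ r, Wfun (l+1) r - Wfun l r ∂m := by
      intro m
      rw [lintegral_withDensity_eq_lintegral_mul m (measurable_Wfun 1) (measurable_Gfun l)]
      apply lintegral_congr
      intro r
      exact Wfun_one_mul_Gfun hl.le r
    have e2 : ∀ (m : Measure ℝ≥0∞), (∫⁻ r, Wfun l r ∂m ≠ ⊤) →
        ∫⁻ r, Wfun (l+1) r - Wfun l r ∂m
          = (∫⁻ r, Wfun (l+1) r ∂m) - ∫⁻ r, Wfun l r ∂m := by
      intro m hm
      exact lintegral_sub (measurable_Wfun l) hm
        (ae_of_all _ (fun r => Wfun_mono (by linarith) r))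
    have hfin2 : ∫⁻ r, Wfun l r ∂m₂ ≠ ⊤ := by rw [← hT l hl]; exact hfin l hl
    rw [hn₁, hn₂, e m₁, e m₂, e2 m₁ (hfin l hl), e2 m₂ hfin2, hT l hl,
      hT (l+1) (by linarith)]
  have hmass' : (n₁ univ).toReal = (n₂ univ).toReal := by
    rw [hn₁, hn₂, hmass, hmass, hT 1 one_pos]
  have hgenInt : ∀ g ∈ genSet, ∫ r, g r ∂n₁ = ∫ r, g r ∂n₂ := by
    rintro g ⟨l, hl, rfl⟩
    have hnn : ∀ (m : Measure ℝ≥0∞), ∫ r, (FCM l hl) r ∂m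
        = (∫⁻ r, Gfun l r ∂m).toReal := by
      intro m
      have hco : ⇑(FCM l hl) = Ffun l := rfl
      rw [hco, integral_eq_lintegral_of_nonneg_ae (ae_of_all _ (Ffun_nonneg l))
        (measurable_Ffun l).aestronglyMeasurable]
      congr 1
      apply lintegral_congr
      intro r
      exact ofReal_Ffun l r
    rw [hnn n₁, hnn n₂, hG l hl]
  have hn : n₁ = n₂ := measure_eq_of_integral_genSet_eq hmass' hgenInt
  intro A hA hA0
  have hrec : ∀ (m : Measure ℝ≥0∞),
      ∫⁻ r in A, (Wfun 1 r)⁻¹ ∂(m.withDensity (Wfun 1)) = m A := by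
    intro m
    rw [setLIntegral_withDensity_eq_setLIntegral_mul m (g := fun r => (Wfun 1 r)⁻¹) (measurable_Wfun 1)
      ((measurable_Wfun 1).inv) hA]
    have : ∀ r ∈ A, (Wfun 1 * fun r => (Wfun 1 r)⁻¹) r = 1 := by
      intro r hr
      simp only [Pi.mul_apply]
      exact ENNReal.mul_inv_cancel (Wfun_one_pos (hA0 hr)).ne' (Wfun_ne_top 1 r)
    rw [setLIntegral_congr_fun hA this, setLIntegral_one]
  calc m₁ A = ∫⁻ r in A, (Wfun 1 r)⁻¹ ∂n₁ := (hrec m₁).symm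
  _ = ∫⁻ r in A, (Wfun 1 r)⁻¹ ∂n₂ := by rw [hn]
  _ = m₂ A := hrec m₂

end CSBPAux

/-- for a non-linear branching mechanism of infinite variation type, a
flow `u`, a CSBP(Ψ) transition family `p` and Lévy measures `ν_t` representing `u`, one
has `ν_{t+s}(A) = ∫_{(0,∞]} p_t(x,A) ν_s(dx)` for all `s,t > 0` and Borel `A ⊆ (0,∞]`. -/
theorem csbp_cluster_levy_flow_property
    (Ψ : ℝ → ℝ) (a b : ℝ) (piM : Measure ℝ) (u : ℝ → ℝ → ℝ)
    (hbm : IsBranchingMechanism Ψ a b piM) (hnl : IsNonLinear b piM)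
    (hiv : ¬ FiniteVariationType b piM) (hu : IsFlow Ψ u)
    (p : ℝ → ℝ≥0∞ → Measure ℝ≥0∞) (hp : IsCSBPTransition u p)
    (ν : ℝ → Measure ℝ≥0∞) (hν : IsLevyRep u ν) :
    ∀ s t : ℝ, 0 < s → 0 < t → ∀ A : Set ℝ≥0∞, MeasurableSet A → A ⊆ Set.Ioi 0 →
      ν (t + s) A = ∫⁻ x, p t x A ∂(ν s) := by
  intro s t hs ht A hA hA0
  have ht0 : (0:ℝ) ≤ t := ht.le
  have hts : 0 < t + s := by linarith
  have hκ : Measurable (p t) := CSBPAux.measurable_p hp ht0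
  have hbind : ((ν s).bind (p t)) A = ∫⁻ x, p t x A ∂(ν s) := Measure.bind_apply hA hκ.aemeasurable
  rw [← hbind]
  have hlip : ∀ eps M : ℝ, 0 < eps → ∃ K : ℝ≥0, LipschitzOnWith K Ψ (Set.Icc eps M) :=
    fun eps M heps => CSBPAux.psi_lipschitzOnWith hbm heps
  -- the W-transform of ν (t+s)
  have hT1 : ∀ l : ℝ, 0 < l →
      ∫⁻ r, CSBPAux.Wfun l r ∂(ν (t+s)) = ENNReal.ofReal (u (t+s) l) := by
    intro l hl
    exact ((hν (t+s) hts).2.2.2 l hl).symm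
  -- the W-transform of the bound measure
  have hT2 : ∀ l : ℝ, 0 < l →
      ∫⁻ r, CSBPAux.Wfun l r ∂((ν s).bind (p t)) = ENNReal.ofReal (u (t+s) l) := by
    intro l hl
    rw [Measure.lintegral_bind hκ.aemeasurable (CSBPAux.measurable_Wfun l).aemeasurable]
    have hinner : ∀ x : ℝ≥0∞, ∫⁻ r, CSBPAux.Wfun l r ∂(p t x) = CSBPAux.Wfun (u t l) x :=
      fun x => CSBPAux.lintegral_Wfun_p hp ht0 x hl
    rw [lintegral_congr hinner]
    have hutl : 0 < u t l := hu.2.1 l hl t ht0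
    have hrep : ∫⁻ r, CSBPAux.Wfun (u t l) r ∂(ν s) = ENNReal.ofReal (u s (u t l)) :=
      ((hν s hs).2.2.2 (u t l) hutl).symm
    rw [hrep]
    congr 1
    exact (CSBPAux.flow_semigroup hlip hu hl ht0 hs.le).symm
  have hT : ∀ l : ℝ, 0 < l →
      ∫⁻ r, CSBPAux.Wfun l r ∂(ν (t+s)) = ∫⁻ r, CSBPAux.Wfun l r ∂((ν s).bind (p t)) := by
    intro l hl; rw [hT1 l hl, hT2 l hl]
  have hfin : ∀ l : ℝ, 0 < l → ∫⁻ r, CSBPAux.Wfun l r ∂(ν (t+s)) ≠ ⊤ := by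
    intro l hl; rw [hT1 l hl]; exact ENNReal.ofReal_ne_top
  exact CSBPAux.levy_uniqueness hT hfin A hA hA0
end

section
/- Let Ψ be a non-linear branching mechanism with γ := sup{λ ∈ [0,∞) : Ψ(λ) ≤ 0} < ∞, let u be a flow for Ψ, and let (p_t) be a CSBP(Ψ) transition family. Then for all η, δ ∈ (0,1) there exists a > 0 such that for every x ∈ [2η,∞) and every s ∈ [0,a], p_s(x, [0,η]) ≤ δ. -/
open MeasureTheory Set Filter Topology
open scoped ENNReal NNReal

/-- for a non-linear branching mechanism `Ψ` with
`γ = sup{λ ≥ 0 : Ψ(λ) ≤ 0} < ∞` (i.e. the set is bounded above), a flow `u` and a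
CSBP(Ψ) transition family `p`: for all `η, δ ∈ (0,1)` there exists `a > 0` such that
`p_s(x,[0,η]) ≤ δ` for every `x ≥ 2η` and every `s ∈ [0,a]`. -/
theorem csbp_uniform_escape_from_low_levels
    (Ψ : ℝ → ℝ) (a b : ℝ) (piM : Measure ℝ) (u : ℝ → ℝ → ℝ)
    (hbm : IsBranchingMechanism Ψ a b piM) (hnl : IsNonLinear b piM)
    (hγ : BddAbove {l : ℝ | 0 ≤ l ∧ Ψ l ≤ 0}) (hu : IsFlow Ψ u)
    (p : ℝ → ℝ≥0∞ → Measure ℝ≥0∞) (hp : IsCSBPTransition u p) :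
    ∀ η δ : ℝ, 0 < η → η < 1 → 0 < δ → δ < 1 →
      ∃ a0 : ℝ, 0 < a0 ∧ ∀ x : ℝ, 2 * η ≤ x → ∀ s : ℝ, 0 ≤ s → s ≤ a0 →
        p s (ENNReal.ofReal x) (Set.Iic (ENNReal.ofReal η)) ≤ ENNReal.ofReal δ := by
  intro η δ hη hη1 hδ hδ1
  set l : ℝ := (1 - Real.log δ) / η with hl_def
  have hlogδ : Real.log δ < 0 := Real.log_neg hδ hδ1
  have hl : 0 < l := div_pos (by linarith) hη
  have hlη : l * η = 1 - Real.log δ := by rw [hl_def]; field_simp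
  have hcont : ContinuousWithinAt (fun s => u s l) (Set.Ici 0) 0 :=
    (hu.2.2 l hl 0 le_rfl).continuousWithinAt
  have hε : (0:ℝ) < 1 / (2 * η) := by positivity
  rw [Metric.continuousWithinAt_iff] at hcont
  obtain ⟨a0, ha0, ha0'⟩ := hcont _ hε
  refine ⟨a0 / 2, by positivity, ?_⟩
  intro x hx s hs hsa
  have hx0 : 0 < x := by linarith
  have hus : 0 < u s l := hu.2.1 l hl s hs
  have hnear : |u s l - l| < 1 / (2 * η) := by
    have h0 : u 0 l = l := hu.1 l hl
    have hd : dist (u s l) (u 0 l) < 1 / (2 * η) := by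
      apply ha0' hs
      rw [Real.dist_eq, abs_of_nonneg (by linarith : (0:ℝ) ≤ s - 0)]
      linarith
    rwa [Real.dist_eq, h0] at hd
  have hul : l - 1 / (2 * η) ≤ u s l := by
    have := (abs_lt.mp hnear).1
    linarith
  have hkey : Real.exp (-x * u s l) ≤ δ * Real.exp (-l * η) := by
    have h1 : 2 * η * u s l ≤ x * u s l :=
      mul_le_mul_of_nonneg_right hx hus.le
    have h2 : 2 * η * (l - 1 / (2 * η)) ≤ 2 * η * u s l :=
      mul_le_mul_of_nonneg_left hul (by linarith)
    have h3 : 2 * η * (l - 1 / (2 * η)) = 2 * η * l - 1 := by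
      field_simp
    have hexp : -x * u s l ≤ Real.log δ - l * η := by nlinarith
    calc Real.exp (-x * u s l) ≤ Real.exp (Real.log δ - l * η) :=
          Real.exp_le_exp.mpr hexp
      _ = δ * Real.exp (-l * η) := by
          rw [show Real.log δ - l * η = Real.log δ + -l * η by ring,
            Real.exp_add, Real.exp_log hδ]
  have hxne : (ENNReal.ofReal x) ≠ ⊤ := ENNReal.ofReal_ne_top
  have hlap := hp.2.1 s hs (ENNReal.ofReal x) hxne l hl
  rw [ENNReal.toReal_ofReal hx0.le] at hlap
  set P := p s (ENNReal.ofReal x) with hP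
  have hsub : Set.Iic (ENNReal.ofReal η) ⊆ {(⊤ : ℝ≥0∞)}ᶜ := fun z hz =>
    (lt_of_le_of_lt hz ENNReal.ofReal_lt_top).ne
  have hfm : Measurable (fun z : ℝ≥0∞ => ENNReal.ofReal (Real.exp (-l * z.toReal))) := by
    apply ENNReal.measurable_ofReal.comp
    exact Real.continuous_exp.measurable.comp (measurable_const.mul ENNReal.measurable_toReal)
  set c : ℝ≥0∞ := ENNReal.ofReal (Real.exp (-l * η)) with hc_def
  have hc0 : c ≠ 0 := by
    simp [hc_def, ENNReal.ofReal_eq_zero, not_le, Real.exp_pos]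
  have hct : c ≠ ⊤ := ENNReal.ofReal_ne_top
  have hchain : P (Set.Iic (ENNReal.ofReal η)) * c ≤ ENNReal.ofReal δ * c := by
    calc P (Set.Iic (ENNReal.ofReal η)) * c
        = ∫⁻ _ in Set.Iic (ENNReal.ofReal η), c ∂P := by
          rw [setLIntegral_const, mul_comm]
      _ ≤ ∫⁻ z in Set.Iic (ENNReal.ofReal η),
            ENNReal.ofReal (Real.exp (-l * z.toReal)) ∂P := by
          apply setLIntegral_mono hfm
          intro z hz
          apply ENNReal.ofReal_le_ofReal
          apply Real.exp_le_exp.mpr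
          have hzt : z.toReal ≤ η := ENNReal.toReal_le_of_le_ofReal hη.le hz
          nlinarith
      _ ≤ ∫⁻ z in {(⊤ : ℝ≥0∞)}ᶜ,
            ENNReal.ofReal (Real.exp (-l * z.toReal)) ∂P :=
          lintegral_mono_set hsub
      _ = ENNReal.ofReal (Real.exp (-x * u s l)) := hlap
      _ ≤ ENNReal.ofReal δ * c := by
          rw [hc_def, ← ENNReal.ofReal_mul hδ.le]
          exact ENNReal.ofReal_le_ofReal hkey
  exact (ENNReal.mul_le_mul_iff_left hc0 hct).mp hchain
end
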